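/- There exists a unique associative product ∘ : S̃_n × S̃_n → S̃_n (the Demazure or 0-Hecke product) satisfying s_i ∘ s_i = s_i for all i and π' ∘ π'' = π'π'' whenever ℓ(π'π'') = ℓ(π') + ℓ(π''). Moreover, for any involution z ∈ Ĩ_n, i ∈ ℤ, the element s_i ∘ z ∘ s_i equals: z if z(i) > z(i+1); z s_i if z(i) = i and z(i+1) = i+1; and s_i z s_i otherwise. -/

import Mathlib

open scoped TensorProduct

/-- Membership in the affine symmetric group `S̃_n`, viewed inside `Equiv.Perm ℤ`. -/
def IsAffine (n : ℕ) (π : Equiv.Perm ℤ) : Prop :=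
  (∀ i : ℤ, π (i + n) = π i + n) ∧
  (∑ i ∈ Finset.Icc (1 : ℤ) (n : ℤ), π i) = ∑ i ∈ Finset.Icc (1 : ℤ) (n : ℤ), i

/-- The underlying function of the affine reflection `t_{ij}`. -/
def affTFun (n : ℕ) (i j k : ℤ) : ℤ :=
  if (k - i) % (n : ℤ) = 0 then k - i + j
  else if (k - j) % (n : ℤ) = 0 then k - j + i
  else k

theorem affTFun_involutive {n : ℕ} {i j : ℤ} (h : ¬ (j - i) % (n : ℤ) = 0) :
    Function.Involutive (affTFun n i j) := by
  have key : ∀ a : ℤ, a % (n : ℤ) = 0 ↔ (n : ℤ) ∣ a :=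
    fun a => (@Int.dvd_iff_emod_eq_zero (n : ℤ) a).symm
  rw [key] at h
  intro k
  by_cases h1 : (n : ℤ) ∣ (k - i)
  · have h2 : ¬ (n : ℤ) ∣ (k - i + j - i) := by
      intro hd
      apply h
      have h5 : j - i = (k - i + j - i) - (k - i) := by ring
      rw [h5]
      exact dvd_sub hd h1
    have h3 : (n : ℤ) ∣ (k - i + j - j) := by
      have h5 : k - i + j - j = k - i := by ring
      rw [h5]; exact h1
    have e1 : affTFun n i j k = k - i + j := by simp [affTFun, key, h1]
    have e2 : affTFun n i j (k - i + j) = k := by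
      simp only [affTFun, key]
      rw [if_neg h2, if_pos h3]
      ring
    rw [e1, e2]
  · by_cases h2 : (n : ℤ) ∣ (k - j)
    · have h3 : (n : ℤ) ∣ (k - j + i - i) := by
        have h5 : k - j + i - i = k - j := by ring
        rw [h5]; exact h2
      have e1 : affTFun n i j k = k - j + i := by simp [affTFun, key, h1, h2]
      have e2 : affTFun n i j (k - j + i) = k := by
        simp only [affTFun, key]
        rw [if_pos h3]
        ring
      rw [e1, e2]
    · have e1 : affTFun n i j k = k := by simp [affTFun, key, h1, h2]
      rw [e1, e1]

/-- The affine reflection `t_{ij}` (interpreted as the identity when `i ≡ j (mod n)`). -/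
noncomputable def affT (n : ℕ) (i j : ℤ) : Equiv.Perm ℤ :=
  if h : (j - i) % (n : ℤ) = 0 then 1
  else Function.Involutive.toPerm _ (affTFun_involutive h)

/-- The simple reflection `s_i = t_{i,i+1}` of `S̃_n`. -/
noncomputable def affS (n : ℕ) (i : ℤ) : Equiv.Perm ℤ := affT n i (i + 1)

/-- Coxeter length: minimal length of a word in the simple reflections `s_1, …, s_n`. -/
noncomputable def wordLength (n : ℕ) (π : Equiv.Perm ℤ) : ℕ :=
  sInf {l : ℕ | ∃ w : List ℤ,
    (∀ x ∈ w, 1 ≤ x ∧ x ≤ (n : ℤ)) ∧ (w.map (affS n)).prod = π ∧ w.length = l}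

/-- The set of inversions of `π`, up to the diagonal translation relation. -/
def InvPair (π : Equiv.Perm ℤ) : Type :=
  {p : ℤ × ℤ // p.1 < p.2 ∧ π p.2 < π p.1}

/-- The number of equivalence classes of inversions of `π` under
`(a,b) ~ (a + mn, b + mn)`. -/
noncomputable def invLength (n : ℕ) (π : Equiv.Perm ℤ) : ℕ :=
  Nat.card (Quot fun p q : InvPair π =>
    ∃ m : ℤ, q.1.1 = p.1.1 + m * n ∧ q.1.2 = p.1.2 + m * n)

/-- Entry `c_i` of the code of an affine permutation. -/
noncomputable def codeEntry (π : Equiv.Perm ℤ) (i : ℤ) : ℕ :=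
  Nat.card {j : ℤ // i < j ∧ π j < π i}

/-- Entry `ĉ_i` of the involution code of an affine involution. -/
noncomputable def icodeEntry (z : Equiv.Perm ℤ) (i : ℤ) : ℕ :=
  Nat.card {j : ℤ // i < j ∧ z j < z i ∧ z j ≤ i}

/-- `ℓ'(z)`: `n` minus the number of orbits of `z` acting on `ℤ/nℤ`. -/
noncomputable def lprime (n : ℕ) (z : Equiv.Perm ℤ) : ℕ :=
  n - Nat.card (Quot fun a b : ZMod n => ((z (a.val : ℤ) : ℤ) : ZMod n) = b)

/-- The characterizing properties of the Demazure (0-Hecke) product on `S̃_n`: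
closure, associativity, `s_i ∘ s_i = s_i`, and agreement with the group product
on length-additive factorizations. -/
def IsDemazure (n : ℕ) (D : Equiv.Perm ℤ → Equiv.Perm ℤ → Equiv.Perm ℤ) : Prop :=
  (∀ a b, IsAffine n a → IsAffine n b → IsAffine n (D a b)) ∧
  (∀ a b c, IsAffine n a → IsAffine n b → IsAffine n c →
    D (D a b) c = D a (D b c)) ∧
  (∀ i : ℤ, D (affS n i) (affS n i) = affS n i) ∧
  (∀ a b, IsAffine n a → IsAffine n b →
    wordLength n (a * b) = wordLength n a + wordLength n b → D a b = a * b)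

/-- The set of Hecke atoms `{π : π⁻¹ ∘ π = z}`. -/
def AHecke (n : ℕ) (D : Equiv.Perm ℤ → Equiv.Perm ℤ → Equiv.Perm ℤ)
    (z : Equiv.Perm ℤ) : Set (Equiv.Perm ℤ) :=
  {π | IsAffine n π ∧ D π⁻¹ π = z}

/-- The set of atoms: minimal-length Hecke atoms. -/
def DemAtoms (n : ℕ) (D : Equiv.Perm ℤ → Equiv.Perm ℤ → Equiv.Perm ℤ)
    (z : Equiv.Perm ℤ) : Set (Equiv.Perm ℤ) :=
  {π | π ∈ AHecke n D z ∧ ∀ σ ∈ AHecke n D z, wordLength n π ≤ wordLength n σ}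

/-- The Bruhat covering relation on `S̃_n`. -/
def BruhatCov (n : ℕ) (a b : Equiv.Perm ℤ) : Prop :=
  (∃ i j : ℤ, i < j ∧ (j - i) % (n : ℤ) ≠ 0 ∧ b = a * affT n i j) ∧
  wordLength n b = wordLength n a + 1

/-- The Bruhat order on `S̃_n`. -/
def BruhatLE (n : ℕ) : Equiv.Perm ℤ → Equiv.Perm ℤ → Prop :=
  Relation.ReflTransGen (BruhatCov n)

/-- The covering relation of the Bruhat order restricted to involutions in `S̃_n`. -/
def BruhatCovI (n : ℕ) (y z : Equiv.Perm ℤ) : Prop :=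
  IsAffine n y ∧ IsAffine n z ∧ y⁻¹ = y ∧ z⁻¹ = z ∧
  BruhatLE n y z ∧ y ≠ z ∧
  ∀ w : Equiv.Perm ℤ, IsAffine n w → w⁻¹ = w →
    BruhatLE n y w → BruhatLE n w z → w = y ∨ w = z

/-- Strict dominance order on partitions (written as weakly decreasing functions). -/
def DomLT (p q : ℕ → ℕ) : Prop :=
  p ≠ q ∧ ∀ k : ℕ, ∑ i ∈ Finset.range k, p i ≤ ∑ i ∈ Finset.range k, q i

/-- The shape `λ(π)`: the transpose of the partition sorting the code of `π⁻¹`,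
recorded as the weakly decreasing function `k ↦ λ(π)_{k+1}`. -/
noncomputable def affShape (n : ℕ) (π : Equiv.Perm ℤ) : ℕ → ℕ :=
  fun k => Multiset.countP (fun x => k < x)
    ((Finset.Icc (1 : ℤ) (n : ℤ)).val.map (codeEntry π⁻¹))

/-- The shape `μ(z)`: the transpose of the partition sorting the involution code of `z`,
recorded as the weakly decreasing function `k ↦ μ(z)_{k+1}`. -/
noncomputable def invShape (n : ℕ) (z : Equiv.Perm ℤ) : ℕ → ℕ :=
  fun k => Multiset.countP (fun x => k < x)
    ((Finset.Icc (1 : ℤ) (n : ℤ)).val.map (icodeEntry z))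

/-- The weakly decreasing rearrangement of a multiset of naturals, padded by zeros. -/
noncomputable def rearr (s : Multiset ℕ) : ℕ → ℕ :=
  fun k => ((s.sort (· ≤ ·)).reverse).getD k 0

/-- Remove the entries of a list of integers that repeat an earlier residue mod `n`. -/
def dedupMod (n : ℕ) : List ℤ → List ℤ
  | [] => []
  | x :: xs => x :: dedupMod n (xs.filter fun y => (y - x) % (n : ℤ) ≠ 0)
termination_by l => l.length
decreasing_by
  simp only [List.length_cons]
  first
  | exact Nat.lt_succ_of_le (List.length_filter_le _ _)
  | exact Nat.lt_succ_of_le (by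
      rw [List.length_unattach]; exact (List.length_filter_le _ _).trans_eq List.length_attach)
  | exact Nat.lt_succ_of_le (by simpa using List.length_filter_le _ xs.attach)

/-- The window `[[z(a₁), a₁, z(a₂), a₂, …]]` of `α_min(z)⁻¹`, where `a₁ < a₂ < ⋯`
are the elements `a ∈ [n]` with `a ≤ z(a)`. -/
noncomputable def aminWindow (n : ℕ) (z : Equiv.Perm ℤ) : List ℤ :=
  dedupMod n
    ((((Finset.Icc (1 : ℤ) (n : ℤ)).sort (· ≤ ·)).filter fun a => a ≤ z a).flatMap
      fun a => [z a, a])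

/-- Cyclically decreasing elements of `S̃_n`. -/
def IsCycDec (n : ℕ) (π : Equiv.Perm ℤ) : Prop :=
  ∃ w : List ℤ,
    (∀ x ∈ w, 1 ≤ x ∧ x ≤ (n : ℤ)) ∧ (w.map (affS n)).prod = π ∧
    w.length = wordLength n π ∧
    w.Pairwise fun a b => (a + 1 - b) % (n : ℤ) ≠ 0

/-- The coefficient of the monomial `∏ₖ xₖ₊₁^(α k)` in Lam's affine Stanley symmetric
function `F_π`: the number of length-additive factorizations of `π` into cyclically
decreasing factors of lengths prescribed by `α`. -/
noncomputable def stanleyCoeff (n : ℕ) (π : Equiv.Perm ℤ) (α : ℕ →₀ ℕ) : ℕ :=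
  Nat.card {f : ℕ → Equiv.Perm ℤ //
    (∀ k, IsCycDec n (f k)) ∧ (∀ k, wordLength n (f k) = α k) ∧
    (∑ k ∈ α.support, α k) = wordLength n π ∧
    ∃ N : ℕ, (∀ k, N ≤ k → f k = 1) ∧ ((List.range N).map f).prod = π}

/-- The set `Φ⁻_r(y)` of Bruhat covers of `y` of the form `τⁿ_{i r}(y)` with `i < r`
and `i ∉ {r, y(r)} + nℤ`. -/
def PhiMinus (n : ℕ) (τ : ℤ → ℤ → Equiv.Perm ℤ → Equiv.Perm ℤ)
    (y : Equiv.Perm ℤ) (r : ℤ) : Set (Equiv.Perm ℤ) :=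
  {z | BruhatCovI n y z ∧ ∃ i : ℤ, i < r ∧ (i - r) % (n : ℤ) ≠ 0 ∧
    (i - y r) % (n : ℤ) ≠ 0 ∧ z = τ i r y}

/-- The set `Φ⁺_r(y)` of Bruhat covers of `y` of the form `τⁿ_{r j}(y)` with `r < j`
and `j ∉ {r, y(r)} + nℤ`. -/
def PhiPlus (n : ℕ) (τ : ℤ → ℤ → Equiv.Perm ℤ → Equiv.Perm ℤ)
    (y : Equiv.Perm ℤ) (r : ℤ) : Set (Equiv.Perm ℤ) :=
  {z | BruhatCovI n y z ∧ ∃ j : ℤ, r < j ∧ (j - r) % (n : ℤ) ≠ 0 ∧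
    (j - y r) % (n : ℤ) ≠ 0 ∧ z = τ r j y}

/-- The affine symmetric group as a subtype of `Equiv.Perm ℤ`. -/
abbrev AffPerm (n : ℕ) := {π : Equiv.Perm ℤ // IsAffine n π}

/-- The coproduct `Δ(π) = Σ_{π ≐ π'π''} π' ⊗ π''` on `ℚ S̃_n`. -/
noncomputable def affComul (n : ℕ) :
    (AffPerm n →₀ ℚ) →ₗ[ℚ] TensorProduct ℚ (AffPerm n →₀ ℚ) (AffPerm n →₀ ℚ) :=
  Finsupp.lift _ ℚ _ fun π : AffPerm n =>
    ∑ᶠ p ∈ {p : AffPerm n × AffPerm n |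
        p.1.val * p.2.val = π.val ∧
        wordLength n π.val = wordLength n p.1.val + wordLength n p.2.val},
      (Finsupp.single p.1 (1 : ℚ)) ⊗ₜ[ℚ] (Finsupp.single p.2 (1 : ℚ))


namespace Dem

open Finset Equiv

variable {n : ℕ}

theorem md {x : ℤ} : x % (n:ℤ) = 0 ↔ (n:ℤ) ∣ x := Int.dvd_iff_emod_eq_zero.symm

theorem Madd {a b : ℤ} (ha : a % (n:ℤ) = 0) (hb : b % (n:ℤ) = 0) :
    (a + b) % (n:ℤ) = 0 := md.mpr (dvd_add (md.mp ha) (md.mp hb))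

theorem Msub {a b : ℤ} (ha : a % (n:ℤ) = 0) (hb : b % (n:ℤ) = 0) :
    (a - b) % (n:ℤ) = 0 := md.mpr (dvd_sub (md.mp ha) (md.mp hb))

theorem Mmulnat (a : ℤ) : (a * n) % (n:ℤ) = 0 := md.mpr (Dvd.intro_left a rfl)

theorem Mshift {a b : ℤ} (m : ℤ) (h : (a - b) % (n:ℤ) = 0) :
    (a + m * n - b) % (n:ℤ) = 0 := by
  have : a + m * n - b = (a - b) + m * n := by ring
  rw [this]; exact Madd h (Mmulnat m)

theorem Mnot_small (hn2 : 2 ≤ n) {a : ℤ} (h : a % (n:ℤ) = 0) (h1 : 0 < a)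
    (h2 : a < (n:ℤ)) : False := by
  have := Int.le_of_dvd h1 (md.mp h)
  omega

theorem Meq0 (hn0 : 0 < n) {a : ℤ} (h : a % (n:ℤ) = 0) (b1 : -(n:ℤ) < a)
    (b2 : a < (n:ℤ)) : a = 0 := by
  have hn' : (0:ℤ) < (n:ℤ)  := by exact_mod_cast hn0
  obtain ⟨q, hq⟩ := md.mp h
  have hq1 : q < 1 := by
    by_contra hc
    push_neg at hc
    have : (n:ℤ) * 1 ≤ (n:ℤ) * q := by
      apply mul_le_mul_of_nonneg_left hc (le_of_lt hn')
    omega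
  have hq2 : -1 < q := by
    by_contra hc
    push_neg at hc
    have : (n:ℤ) * q ≤ (n:ℤ) * (-1) := by
      apply mul_le_mul_of_nonneg_left hc (le_of_lt hn')
    omega
  have : q = 0 := by omega
  subst this
  simpa using hq

theorem one_mod_ne (hn : 2 ≤ n) : ¬ ((1:ℤ) % (n:ℤ) = 0) := by
  intro h
  exact Mnot_small hn h one_pos (by omega)

theorem affS_apply (hn : 2 ≤ n) (i k : ℤ) :
    affS n i k = if (k - i) % (n:ℤ) = 0 then k + 1
      else if (k - (i+1)) % (n:ℤ) = 0 then k - 1 else k := by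
  have h : ¬ ((i + 1) - i) % (n:ℤ) = 0 := by
    have h2 : (i+1) - i = 1 := by ring
    rw [h2]; exact one_mod_ne hn
  rw [affS, affT, dif_neg h]
  show affTFun n i (i+1) k = _
  unfold affTFun
  split_ifs with h1 h2 <;> omega

theorem affS_val0 (hn : 2 ≤ n) {i k : ℤ} (h : (k - i) % (n:ℤ) = 0) :
    affS n i k = k + 1 := by rw [affS_apply hn, if_pos h]

theorem affS_val1 (hn : 2 ≤ n) {i k : ℤ} (h : (k - i - 1) % (n:ℤ) = 0) :
    affS n i k = k - 1 := by
  have h0 : ¬ (k - i) % (n:ℤ) = 0 := by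
    intro hc
    refine Mnot_small hn (Msub hc h) ?_ ?_ <;>
      first
        | (show (0:ℤ) < k - i - (k - i - 1); omega)
        | (show k - i - (k - i - 1) < (n:ℤ)
           have : k - i - (k - i - 1) = 1 := by ring
           rw [this]; exact_mod_cast hn)
  have h1 : (k - (i+1)) % (n:ℤ) = 0 := by
    have : k - (i+1) = k - i - 1 := by ring
    rw [this]; exact h
  rw [affS_apply hn, if_neg h0, if_pos h1]

theorem affS_val2 (hn : 2 ≤ n) {i k : ℤ} (h0 : ¬ (k - i) % (n:ℤ) = 0)
    (h1 : ¬ (k - i - 1) % (n:ℤ) = 0) : affS n i k = k := by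
  have h1' : ¬ (k - (i+1)) % (n:ℤ) = 0 := by
    intro hc; apply h1
    have : k - i - 1 = k - (i+1) := by ring
    rw [this]; exact hc
  rw [affS_apply hn, if_neg h0, if_neg h1']

theorem affS_congr (hn : 2 ≤ n) {i i' : ℤ} (h : (i - i') % (n:ℤ) = 0) :
    affS n i = affS n i' := by
  ext k
  rw [affS_apply hn, affS_apply hn]
  have e0 : (k - i) % (n:ℤ) = 0 ↔ (k - i') % (n:ℤ) = 0 := by
    constructor <;> intro hx
    · have := Madd hx h
      have e : k - i + (i - i') = k - i' := by ring
      rwa [e] at this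
    · have := Msub hx h
      have e : k - i' - (i - i') = k - i := by ring
      rwa [e] at this
  have e1 : (k - (i+1)) % (n:ℤ) = 0 ↔ (k - (i'+1)) % (n:ℤ) = 0 := by
    constructor <;> intro hx
    · have := Madd hx h
      have e : k - (i+1) + (i - i') = k - (i'+1) := by ring
      rwa [e] at this
    · have := Msub hx h
      have e : k - (i'+1) - (i - i') = k - (i+1) := by ring
      rwa [e] at this
  by_cases h0 : (k - i) % (n:ℤ) = 0
  · rw [if_pos h0, if_pos (e0.mp h0)]
  · rw [if_neg h0, if_neg (fun hc => h0 (e0.mpr hc))]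
    by_cases h1 : (k - (i+1)) % (n:ℤ) = 0
    · rw [if_pos h1, if_pos (e1.mp h1)]
    · rw [if_neg h1, if_neg (fun hc => h1 (e1.mpr hc))]

theorem affS_one_of (hn : n = 1) (i : ℤ) : affS n i = 1 := by
  subst hn
  rw [affS, affT, dif_pos]
  omega

theorem affS_affS (i k : ℤ) : affS n i (affS n i k) = k := by
  by_cases h : ((i + 1) - i) % (n:ℤ) = 0
  · rw [affS, affT, dif_pos h]; rfl
  · rw [affS, affT, dif_neg h]
    exact affTFun_involutive h k

theorem affS_mul_self (i : ℤ) : affS n i * affS n i = 1 := by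
  ext k
  exact affS_affS i k

theorem affS_inv (i : ℤ) : (affS n i)⁻¹ = affS n i :=
  inv_eq_of_mul_eq_one_right (affS_mul_self i)

/-- extension of the equivariance to all integer multiples -/
theorem aff_apply_add_mul {π : Equiv.Perm ℤ} (hπ : ∀ x : ℤ, π (x + n) = π x + n)
    (m : ℤ) (x : ℤ) : π (x + m * n) = π x + m * n := by
  induction m using Int.induction_on with
  | zero => simp
  | succ m ih =>
      have e : x + (m + 1) * n = (x + m * n) + n := by ring
      rw [e, hπ, ih]; ring
  | pred m ih =>
      have h2 := hπ (x + (-m - 1) * n)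
      have e : x + (-m - 1) * n + n = x + (-m) * n := by ring
      rw [e, ih] at h2
      linear_combination -h2

theorem aff_inv_equivariant {π : Equiv.Perm ℤ} (hπ : ∀ x : ℤ, π (x + n) = π x + n)
    (x : ℤ) : π⁻¹ (x + n) = π⁻¹ x + n := by
  apply π.injective
  rw [show π (π⁻¹ (x + n)) = x + n by simp, hπ, show π (π⁻¹ x) = x by simp]

/-- periodic function extension -/
theorem per_add_mul {f : ℤ → ℤ} (hf : ∀ x : ℤ, f (x + n) = f x) (m x : ℤ) :
    f (x + m * n) = f x := by
  induction m using Int.induction_on with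
  | zero => simp
  | succ m ih =>
      have e : x + (m + 1) * n = (x + m * n) + n := by ring
      rw [e, hf, ih]
  | pred m ih =>
      have h2 := hf (x + (-m - 1) * n)
      have e : x + (-m - 1) * n + n = x + (-m) * n := by ring
      rw [e, ih] at h2
      rw [← h2]

/-- key reindexing: sums of periodic functions over a window are invariant
under composition with an equivariant bijection -/
theorem sum_window_comp (hn : 0 < n) {π : Equiv.Perm ℤ}
    (hπ : ∀ x : ℤ, π (x + n) = π x + n) {f : ℤ → ℤ} (hf : ∀ x : ℤ, f (x + n) = f x) :
    ∑ k ∈ Icc (1:ℤ) (n:ℤ), f (π k) = ∑ k ∈ Icc (1:ℤ) (n:ℤ), f k := by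
  have hn' : (1:ℤ) ≤ (n:ℤ) := by exact_mod_cast hn
  have hdec : ∀ y : ℤ, (y - 1) % (n:ℤ) + 1 = y + (-((y - 1) / (n:ℤ))) * n := by
    intro y
    have h := Int.emod_add_mul_ediv (y - 1) (n:ℤ)
    linear_combination h
  have hshift : ∀ (y q : ℤ), (y + q * (n:ℤ) - 1) % (n:ℤ) = (y - 1) % (n:ℤ) := by
    intro y q
    have e : y + q * (n:ℤ) - 1 = (y - 1) + q * (n:ℤ) := by ring
    rw [e, Int.add_mul_emod_self_right]
  have hid : ∀ y : ℤ, 1 ≤ y → y ≤ (n:ℤ) → (y - 1) % (n:ℤ) + 1 = y := by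
    intro y h1 h2
    rw [Int.emod_eq_of_lt (by omega) (by omega)]
    omega
  apply Finset.sum_nbij' (i := fun k => (π k - 1) % (n:ℤ) + 1)
    (j := fun k => (π⁻¹ k - 1) % (n:ℤ) + 1)
  · intro a _
    simp only [Finset.mem_Icc]
    constructor
    · have := Int.emod_nonneg (π a - 1) (by omega : (n:ℤ) ≠ 0); omega
    · have := Int.emod_lt_of_pos (π a - 1) (by omega : (0:ℤ) < (n:ℤ)); omega
  · intro a _
    simp only [Finset.mem_Icc]
    constructor
    · have := Int.emod_nonneg (π⁻¹ a - 1) (by omega : (n:ℤ) ≠ 0); omega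
    · have := Int.emod_lt_of_pos (π⁻¹ a - 1) (by omega : (0:ℤ) < (n:ℤ)); omega
  · intro a ha
    simp only [Finset.mem_Icc] at ha
    rw [hdec (π a), aff_apply_add_mul (aff_inv_equivariant hπ), show π⁻¹ (π a) = a by simp,
      hshift, hid a ha.1 ha.2]
  · intro a ha
    simp only [Finset.mem_Icc] at ha
    rw [hdec (π⁻¹ a), aff_apply_add_mul hπ, show π (π⁻¹ a) = a by simp,
      hshift, hid a ha.1 ha.2]
  · intro a _
    rw [hdec (π a), per_add_mul hf]

theorem isAffine_one : IsAffine n 1 := by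
  constructor
  · intro i; rfl
  · rfl

theorem isAffine_mul {π σ : Equiv.Perm ℤ} (hπ : IsAffine n π) (hσ : IsAffine n σ) :
    IsAffine n (π * σ) := by
  rcases hπ with ⟨hπ1, hπ2⟩
  rcases hσ with ⟨hσ1, hσ2⟩
  rcases Nat.eq_zero_or_pos n with h0 | hpos
  · subst h0
    refine ⟨?_, ?_⟩
    · intro i; simpa using hπ1 (σ (i + 0))
    · simp
  constructor
  · intro i
    simp only [Equiv.Perm.mul_apply]
    rw [hσ1, hπ1]
  · have key : ∑ k ∈ Icc (1:ℤ) (n:ℤ), (fun x => π x - x) (σ k)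
        = ∑ k ∈ Icc (1:ℤ) (n:ℤ), (fun x => π x - x) k := by
      exact sum_window_comp (f := fun x => π x - x) hpos hσ1
        (fun x => by show π (x + (n:ℤ)) - (x + (n:ℤ)) = π x - x; rw [hπ1]; ring)
    simp only at key
    have e1 : ∑ k ∈ Icc (1:ℤ) (n:ℤ), (π (σ k) - σ k)
        = (∑ k ∈ Icc (1:ℤ) (n:ℤ), π (σ k)) - ∑ k ∈ Icc (1:ℤ) (n:ℤ), σ k :=
      Finset.sum_sub_distrib (fun k => π (σ k)) (fun k => σ k)
    have e2 : ∑ k ∈ Icc (1:ℤ) (n:ℤ), (π k - k)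
        = (∑ k ∈ Icc (1:ℤ) (n:ℤ), π k) - ∑ k ∈ Icc (1:ℤ) (n:ℤ), k :=
      Finset.sum_sub_distrib (fun k => π k) (fun k => k)
    rw [e1, e2, hσ2, hπ2] at key
    simp only [Equiv.Perm.mul_apply]
    omega

theorem isAffine_inv {π : Equiv.Perm ℤ} (hπ : IsAffine n π) : IsAffine n π⁻¹ := by
  rcases hπ with ⟨hπ1, hπ2⟩
  rcases Nat.eq_zero_or_pos n with h0 | hpos
  · subst h0
    refine ⟨?_, ?_⟩
    · intro i
      simpa using congrArg π⁻¹ (rfl : i + ((0:ℕ):ℤ) = i + ((0:ℕ):ℤ))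
    · simp
  constructor
  · exact aff_inv_equivariant hπ1
  · have key : ∑ k ∈ Icc (1:ℤ) (n:ℤ), (fun x => π⁻¹ x - x) (π k)
        = ∑ k ∈ Icc (1:ℤ) (n:ℤ), (fun x => π⁻¹ x - x) k := by
      exact sum_window_comp (f := fun x => π⁻¹ x - x) hpos hπ1
        (fun x => by
          show π⁻¹ (x + (n:ℤ)) - (x + (n:ℤ)) = π⁻¹ x - x
          rw [aff_inv_equivariant hπ1]; ring)
    simp only [show ∀ x, π⁻¹ (π x) = x from fun x => by simp] at key
    have e1 : ∑ k ∈ Icc (1:ℤ) (n:ℤ), (k - π k)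
        = (∑ k ∈ Icc (1:ℤ) (n:ℤ), k) - ∑ k ∈ Icc (1:ℤ) (n:ℤ), π k :=
      Finset.sum_sub_distrib (fun k => k) (fun k => π k)
    have e2 : ∑ k ∈ Icc (1:ℤ) (n:ℤ), (π⁻¹ k - k)
        = (∑ k ∈ Icc (1:ℤ) (n:ℤ), π⁻¹ k) - ∑ k ∈ Icc (1:ℤ) (n:ℤ), k :=
      Finset.sum_sub_distrib (fun k => π⁻¹ k) (fun k => k)
    rw [e1, e2, hπ2] at key
    omega

theorem affS_equivariant (i : ℤ) (x : ℤ) : affS n i (x + n) = affS n i x + n := by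
  rcases Nat.lt_or_ge n 2 with h | hn
  · interval_cases n
    · simp
    · rw [affS_one_of rfl]; rfl
  · have hn' : (2:ℤ) ≤ (n:ℤ) := by exact_mod_cast hn
    rw [affS_apply hn, affS_apply hn]
    have e0 : (x + (n:ℤ) - i) % (n:ℤ) = 0 ↔ (x - i) % (n:ℤ) = 0 := by
      constructor <;> intro hx
      · have := Msub hx (Mmulnat 1)
        have e : x + (n:ℤ) - i - 1 * n = x - i := by ring
        rwa [e] at this
      · have := Madd hx (Mmulnat 1)
        have e : x - i + 1 * n = x + (n:ℤ) - i := by ring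
        rwa [e] at this
    have e1 : (x + (n:ℤ) - (i+1)) % (n:ℤ) = 0 ↔ (x - (i+1)) % (n:ℤ) = 0 := by
      constructor <;> intro hx
      · have := Msub hx (Mmulnat 1)
        have e : x + (n:ℤ) - (i+1) - 1 * n = x - (i+1) := by ring
        rwa [e] at this
      · have := Madd hx (Mmulnat 1)
        have e : x - (i+1) + 1 * n = x + (n:ℤ) - (i+1) := by ring
        rwa [e] at this
    by_cases h0 : (x - i) % (n:ℤ) = 0
    · rw [if_pos (e0.mpr h0), if_pos h0]; ring
    · rw [if_neg (fun hc => h0 (e0.mp hc)), if_neg h0]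
      by_cases h1 : (x - (i+1)) % (n:ℤ) = 0
      · rw [if_pos (e1.mpr h1), if_pos h1]; ring
      · rw [if_neg (fun hc => h1 (e1.mp hc)), if_neg h1]

theorem isAffine_affS (i : ℤ) : IsAffine n (affS n i) := by
  rcases Nat.lt_or_ge n 2 with h | hn
  · interval_cases n
    · refine ⟨?_, ?_⟩
      · intro x; simpa using affS_equivariant i x
      · simp
    · rw [affS_one_of rfl]; exact isAffine_one
  · have hn' : (2:ℤ) ≤ (n:ℤ) := by exact_mod_cast hn
    constructor
    · exact affS_equivariant i
    · set a : ℤ := (i - 1) % (n:ℤ) + 1 with ha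
      set b : ℤ := i % (n:ℤ) + 1 with hb
      have hna : (n:ℤ) ≠ 0 := by omega
      have hpos : (0:ℤ) < (n:ℤ) := by omega
      have hae := Int.emod_nonneg (i-1) hna
      have hal := Int.emod_lt_of_pos (i-1) hpos
      have hbe := Int.emod_nonneg i hna
      have hbl := Int.emod_lt_of_pos i hpos
      have hamem : a ∈ Icc (1:ℤ) (n:ℤ) := by simp only [Finset.mem_Icc]; omega
      have hbmem : b ∈ Icc (1:ℤ) (n:ℤ) := by simp only [Finset.mem_Icc]; omega
      have hadec : (a - i) % (n:ℤ) = 0 := by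
        have h := Int.emod_add_mul_ediv (i - 1) (n:ℤ)
        have e : a - i = (-((i-1) / (n:ℤ))) * n := by rw [ha]; linear_combination h
        rw [e]
        have : (-((i-1) / (n:ℤ))) * (n:ℤ) = 0 + (-((i-1) / (n:ℤ))) * (n:ℤ) := by ring
        rw [this, Int.add_mul_emod_self_right]
        simp
      have hbdec : (b - i - 1) % (n:ℤ) = 0 := by
        have h := Int.emod_add_mul_ediv i (n:ℤ)
        have e : b - i - 1 = (-(i / (n:ℤ))) * n := by rw [hb]; linear_combination h
        rw [e]
        have : (-(i / (n:ℤ))) * (n:ℤ) = 0 + (-(i / (n:ℤ))) * (n:ℤ) := by ring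
        rw [this, Int.add_mul_emod_self_right]
        simp
      have hab : a ≠ b := by
        intro hc
        have : (1:ℤ) % (n:ℤ) = 0 := by
          have := Msub hbdec hadec
          have e : b - i - 1 - (a - i) = b - a - 1 := by ring
          rw [e, hc] at this
          simpa using this
        exact one_mod_ne hn this
      have hsv : ∀ k, k ∈ Icc (1:ℤ) (n:ℤ) → k ≠ a → k ≠ b → affS n i k = k := by
        intro k hk hka hkb
        simp only [Finset.mem_Icc] at hk
        apply affS_val2 hn
        · intro hc
          apply hka
          have := Msub hc hadec
          have e : k - i - (a - i) = k - a := by ring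
          rw [e] at this
          have := Meq0 (by omega) this (by simp only [Finset.mem_Icc] at hamem; omega)
            (by simp only [Finset.mem_Icc] at hamem; omega)
          omega
        · intro hc
          apply hkb
          have := Msub hc hbdec
          have e : k - i - 1 - (b - i - 1) = k - b := by ring
          rw [e] at this
          have := Meq0 (by omega) this (by simp only [Finset.mem_Icc] at hbmem; omega)
            (by simp only [Finset.mem_Icc] at hbmem; omega)
          omega
      rw [← Finset.add_sum_erase _ _ hamem, ← Finset.add_sum_erase _ _
        (Finset.mem_erase.mpr ⟨Ne.symm hab, hbmem⟩)]
      conv_rhs => rw [← Finset.add_sum_erase _ (fun k => k) hamem, ← Finset.add_sum_erase _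
        (fun k => k) (Finset.mem_erase.mpr ⟨Ne.symm hab, hbmem⟩)]
      have hsum : ∑ k ∈ ((Icc (1:ℤ) (n:ℤ)).erase a).erase b, affS n i k
          = ∑ k ∈ ((Icc (1:ℤ) (n:ℤ)).erase a).erase b, k := by
        apply Finset.sum_congr rfl
        intro k hk
        simp only [Finset.mem_erase] at hk
        exact hsv k hk.2.2 hk.2.1 hk.1
      rw [hsum, affS_val0 hn hadec, affS_val1 hn hbdec]
      ring

end Dem

namespace Dem

open Finset Equiv

variable {n : ℕ}

/-- inversion-count norm on affine permutations -/
noncomputable def invN (n : ℕ) (π : Equiv.Perm ℤ) : ℕ :=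
  ∑ p ∈ (Icc (1:ℤ) (n:ℤ) ×ˢ Icc (1:ℤ) (n:ℤ)).filter (fun p => p.1 < p.2),
    ((π p.2 - π p.1) / (n:ℤ)).natAbs

theorem ediv_flip (hn0 : 0 < n) {d : ℤ} (hd : ¬ d % (n:ℤ) = 0) :
    (-d) / (n:ℤ) = -(d / (n:ℤ)) - 1 := by
  have hn' : (0:ℤ) < (n:ℤ) := by omega
  have h := Int.emod_add_mul_ediv d (n:ℤ)
  have h1 : 0 ≤ d % (n:ℤ) := Int.emod_nonneg _ (by omega)
  have h2 : d % (n:ℤ) < (n:ℤ) := Int.emod_lt_of_pos _ hn'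
  have e : -d = ((n:ℤ) - d % (n:ℤ)) + (-(d / (n:ℤ)) - 1) * (n:ℤ) := by linear_combination h
  rw [e, Int.add_mul_ediv_right _ _ (by omega : (n:ℤ) ≠ 0),
    Int.ediv_eq_zero_of_lt (by omega) (by omega)]
  ring

theorem ediv_addn (hn0 : 0 < n) (x : ℤ) : (x + (n:ℤ)) / (n:ℤ) = x / (n:ℤ) + 1 := by
  have e : x + (n:ℤ) = x + 1 * (n:ℤ) := by ring
  rw [e, Int.add_mul_ediv_right _ _ (by omega : (n:ℤ) ≠ 0)]

theorem apply_rep {π : Equiv.Perm ℤ} (hπ1 : ∀ x : ℤ, π (x + n) = π x + n)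
    {t i : ℤ} (h : (t - i) % (n:ℤ) = 0) : ∃ m : ℤ, t = i + m * n ∧ π t = π i + m * n := by
  obtain ⟨m, hm⟩ := md.mp h
  refine ⟨m, by linear_combination hm, ?_⟩
  have e : t = i + m * (n:ℤ) := by linear_combination hm
  rw [e, aff_apply_add_mul hπ1]

theorem ascent_congr (hn0 : 0 < n) {π : Equiv.Perm ℤ} (hπ1 : ∀ x : ℤ, π (x + n) = π x + n)
    {i t : ℤ} (h : (t - i) % (n:ℤ) = 0) (ha : π i < π (i+1)) : π t < π (t+1) := by
  obtain ⟨m, hm, hv⟩ := apply_rep hπ1 h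
  have h2 : (t + 1 - (i+1)) % (n:ℤ) = 0 := by
    have e : t + 1 - (i + 1) = t - i := by ring
    rw [e]; exact h
  obtain ⟨m', hm', hv'⟩ := apply_rep hπ1 h2
  have hmm : π (t+1) = π (i+1) + m * n := by
    have e : (m' - m) * (n:ℤ) = 0 := by linear_combination hm - hm'
    rcases mul_eq_zero.mp e with h | h
    · have hme : m' = m := by omega
      rw [hv', hme]
    · exact absurd h (by omega)
  omega

theorem class_ne {π : Equiv.Perm ℤ} (hπ : IsAffine n π) {k l : ℤ}
    (h : ¬ (l - k) % (n:ℤ) = 0) : ¬ (π l - π k) % (n:ℤ) = 0 := by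
  intro hc
  apply h
  obtain ⟨m, hm⟩ := md.mp hc
  have e : π l = π (k + m * n) := by
    rw [aff_apply_add_mul hπ.1]
    linear_combination hm
  have := π.injective e
  rw [this]
  have e2 : k + m * (n:ℤ) - k = m * n := by ring
  rw [e2]
  exact md.mpr ⟨m, mul_comm _ _⟩

theorem mem_S {p : ℤ × ℤ} :
    p ∈ (Icc (1:ℤ) (n:ℤ) ×ˢ Icc (1:ℤ) (n:ℤ)).filter (fun p => p.1 < p.2) ↔
    (1 ≤ p.1 ∧ p.1 ≤ (n:ℤ)) ∧ (1 ≤ p.2 ∧ p.2 ≤ (n:ℤ)) ∧ p.1 < p.2 := by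
  simp only [Finset.mem_filter, Finset.mem_product, Finset.mem_Icc]
  tauto

/-- THE KEY STEP LEMMA: right multiplication by `s_i` at an ascent increases `invN` by 1 -/
theorem invN_ascent (hn : 2 ≤ n) {π : Equiv.Perm ℤ} (hπ : IsAffine n π) (i : ℤ)
    (ha : π i < π (i+1)) : invN n (π * affS n i) = invN n π + 1 := by
  have hn0 : 0 < n := by omega
  have hn' : (2:ℤ) ≤ (n:ℤ) := by omega
  obtain ⟨t, ht1, ht2, htc⟩ : ∃ t : ℤ, 1 ≤ t ∧ t ≤ (n:ℤ) ∧ (t - i) % (n:ℤ) = 0 := by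
    refine ⟨(i - 1) % (n:ℤ) + 1, ?_, ?_, ?_⟩
    · have := Int.emod_nonneg (i-1) (by omega : (n:ℤ) ≠ 0); omega
    · have := Int.emod_lt_of_pos (i-1) (by omega : (0:ℤ) < (n:ℤ)); omega
    · have h := Int.emod_add_mul_ediv (i - 1) (n:ℤ)
      have e : (i - 1) % (n:ℤ) + 1 - i = (-((i-1) / (n:ℤ))) * n := by linear_combination h
      rw [e]
      exact md.mpr ⟨-((i-1) / (n:ℤ)), mul_comm _ _⟩
  have hSt : affS n i = affS n t := (affS_congr hn (by
    have h2 := Msub (show ((0:ℤ)) % (n:ℤ) = 0 by simp) htc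
    have e2 : 0 - (t - i) = i - t := by ring
    rwa [e2] at h2)).symm
  have hat : π t < π (t+1) := ascent_congr hn0 hπ.1 htc ha
  rw [hSt]
  rcases eq_or_lt_of_le ht2 with hwrap | hint
  · -- ======== WRAP CASE : t = n ========
    set σ : Equiv.Perm ℤ := π * affS n t with hσdef
    have hv1 : σ 1 = π t - t := by
      have h1 : affS n t 1 = 1 - 1 := by
        apply affS_val1 hn
        have e : (1:ℤ) - t - 1 = -(1 * (n:ℤ)) := by omega
        rw [e]
        exact md.mpr (dvd_neg.mpr ⟨1, mul_comm _ _⟩)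
      show π (affS n t 1) = _
      rw [h1]
      norm_num
      have e : (0:ℤ) = t + (-1) * (n:ℤ) := by omega
      rw [e, aff_apply_add_mul hπ.1]
      omega
    have hvn : σ t = π 1 + t := by
      have h1 : affS n t t = t + 1 := affS_val0 hn (by simp)
      show π (affS n t t) = _
      rw [h1]
      have e : t + 1 = 1 + 1 * (n:ℤ) := by omega
      rw [e, aff_apply_add_mul hπ.1]
      omega
    have hvmid : ∀ x : ℤ, 1 < x → x < t → σ x = π x := by
      intro x hx1 hx2
      have h1 : affS n t x = x := by
        apply affS_val2 hn
        · intro hc; have := Meq0 hn0 hc (by omega) (by omega); omega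
        · intro hc; have := Meq0 hn0 hc (by omega) (by omega); omega
      show π (affS n t x) = _
      rw [h1]
    have hp0 : ((1:ℤ), t) ∈ (Icc (1:ℤ) (n:ℤ) ×ˢ Icc (1:ℤ) (n:ℤ)).filter
        (fun p => p.1 < p.2) := mem_S.mpr ⟨⟨by omega, by omega⟩, ⟨by omega, by omega⟩, by omega⟩
    have hd : ¬ (π t - π 1) % (n:ℤ) = 0 := by
      apply class_ne hπ
      intro hc
      have := Meq0 hn0 hc (by omega) (by omega)
      omega
    have hπn1 : π (t+1) = π 1 + t := by
      have e2 : t + 1 = 1 + 1 * (n:ℤ) := by omega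
      rw [e2, aff_apply_add_mul hπ.1]
      omega
    set E := ((Icc (1:ℤ) (n:ℤ) ×ˢ Icc (1:ℤ) (n:ℤ)).filter
        (fun p => p.1 < p.2)).erase ((1:ℤ), t) with hE
    set F : ℤ × ℤ → ℤ × ℤ := fun p =>
      if p.1 = 1 then (p.2, t) else if p.2 = t then ((1:ℤ), p.1) else p with hF
    have hFapp : ∀ x y : ℤ, F (x, y)
        = if x = 1 then (y, t) else if y = t then ((1:ℤ), x) else (x, y) := fun x y => rfl
    have hEmem : ∀ x y : ℤ, (x, y) ∈ E ↔
        (1 ≤ x ∧ x ≤ (n:ℤ) ∧ 1 ≤ y ∧ y ≤ (n:ℤ) ∧ x < y) ∧ ¬(x = 1 ∧ y = t) := by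
      intro x y
      rw [hE, Finset.mem_erase, mem_S]
      constructor
      · rintro ⟨h1, ⟨c1, c2⟩, ⟨c3, c4⟩, c5⟩
        exact ⟨⟨c1, c2, c3, c4, c5⟩, fun ⟨a, b⟩ => h1 (by rw [a, b])⟩
      · rintro ⟨⟨c1, c2, c3, c4, c5⟩, h2⟩
        refine ⟨fun hc => h2 ?_, ⟨c1, c2⟩, ⟨c3, c4⟩, c5⟩
        rw [Prod.mk.injEq] at hc
        exact hc
    have hFmem : ∀ p ∈ E, F p ∈ E := by
      rintro ⟨k, l⟩ hp
      rw [hEmem] at hp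
      obtain ⟨⟨a1, a2, b1, b2, hlt⟩, hne⟩ := hp
      have hne' : ¬ k = 1 ∨ ¬ l = t := by tauto
      rw [hFapp k l]
      split_ifs with c1 c2 <;> rw [hEmem] <;>
        refine ⟨⟨?_, ?_, ?_, ?_, ?_⟩, fun ⟨c, d⟩ => ?_⟩ <;> rcases hne' with h | h <;> omega
    have hFF : ∀ p ∈ E, F (F p) = p := by
      rintro ⟨k, l⟩ hp
      rw [hEmem] at hp
      obtain ⟨⟨a1, a2, b1, b2, hlt⟩, hne⟩ := hp
      have hne' : ¬ k = 1 ∨ ¬ l = t := by tauto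
      rw [hFapp k l]
      split_ifs with c1 c2
      · rw [hFapp l t, if_neg (show ¬ l = 1 by omega), if_pos rfl, Prod.mk.injEq]
        exact ⟨c1.symm, rfl⟩
      · rw [hFapp 1 k, if_pos rfl, Prod.mk.injEq]
        exact ⟨rfl, c2.symm⟩
      · rw [hFapp k l, if_neg c1, if_neg c2]
    have hterm : ∀ p ∈ E, ((π p.2 - π p.1) / (n:ℤ)).natAbs
        = ((σ (F p).2 - σ (F p).1) / (n:ℤ)).natAbs := by
      rintro ⟨k, l⟩ hp
      rw [hEmem] at hp
      obtain ⟨⟨a1, a2, b1, b2, hlt⟩, hne⟩ := hp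
      by_cases h1 : k = 1
      · have hb : l ≠ t := fun hc => hne ⟨h1, hc⟩
        have eF : F (k, l) = (l, t) := by rw [hFapp k l, if_pos h1]
        rw [eF]
        show ((π l - π k) / (n:ℤ)).natAbs = ((σ t - σ l) / (n:ℤ)).natAbs
        rw [hvn, hvmid l (by omega) (by omega), h1]
        have e : π 1 + t - π l = -(π l - π 1) + (n:ℤ) := by omega
        rw [e, ediv_addn hn0, ediv_flip hn0 (class_ne hπ (by
          intro hc
          have := Meq0 hn0 hc (by omega) (by omega)
          omega))]
        omega
      · by_cases h2 : l = t
        · have eF : F (k, l) = (1, k) := by rw [hFapp k l, if_neg h1, if_pos h2]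
          rw [eF]
          show ((π l - π k) / (n:ℤ)).natAbs = ((σ k - σ 1) / (n:ℤ)).natAbs
          rw [hv1, hvmid k (by omega) (by omega), h2]
          have e : π k - (π t - t) = -(π t - π k) + (n:ℤ) := by omega
          rw [e, ediv_addn hn0, ediv_flip hn0 (class_ne hπ (by
            intro hc
            have := Meq0 hn0 hc (by omega) (by omega)
            omega))]
          omega
        · have eF : F (k, l) = (k, l) := by rw [hFapp k l, if_neg h1, if_neg h2]
          rw [eF]
          show ((π l - π k) / (n:ℤ)).natAbs = ((σ l - σ k) / (n:ℤ)).natAbs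
          rw [hvmid k (by omega) (by omega), hvmid l (by omega) (by omega)]
    have hmain : ∑ p ∈ E, ((π p.2 - π p.1) / (n:ℤ)).natAbs
        = ∑ p ∈ E, ((σ p.2 - σ p.1) / (n:ℤ)).natAbs :=
      Finset.sum_nbij' F F hFmem hFmem hFF hFF hterm
    show invN n σ = invN n π + 1
    unfold invN
    rw [← Finset.add_sum_erase _ _ hp0]
    conv_rhs => rw [← Finset.add_sum_erase _ _ hp0]
    rw [← hE, ← hmain]
    have hterm0 : ((σ ((1:ℤ), t).2 - σ ((1:ℤ), t).1) / (n:ℤ)).natAbs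
        = ((π ((1:ℤ), t).2 - π ((1:ℤ), t).1) / (n:ℤ)).natAbs + 1 := by
      show ((σ t - σ 1) / (n:ℤ)).natAbs = ((π t - π 1) / (n:ℤ)).natAbs + 1
      rw [hvn, hv1]
      have e : π 1 + t - (π t - t) = -(π t - π 1) + (n:ℤ) + (n:ℤ) := by omega
      rw [e, ediv_addn hn0, ediv_addn hn0, ediv_flip hn0 hd]
      have hlt : π t - π 1 < (n:ℤ) := by omega
      have hq : (π t - π 1) / (n:ℤ) ≤ 0 := by
        rcases le_or_gt 0 (π t - π 1) with h | h
        · rw [Int.ediv_eq_zero_of_lt h hlt]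
        · exact le_of_lt (Int.ediv_neg_of_neg_of_pos h (by omega))
      omega
    rw [hterm0]
    omega
  · -- ======== INTERIOR CASE : t < n ========
    set σ : Equiv.Perm ℤ := π * affS n t with hσdef
    have hvt : σ t = π (t+1) := by
      show π (affS n t t) = _
      rw [affS_val0 hn (by simp)]
    have hvt1 : σ (t+1) = π t := by
      show π (affS n t (t+1)) = _
      have h1 : affS n t (t+1) = t + 1 - 1 := by
        apply affS_val1 hn
        simp
      rw [h1]
      norm_num
    have hvmid : ∀ x : ℤ, 1 ≤ x → x ≤ (n:ℤ) → x ≠ t → x ≠ t+1 → σ x = π x := by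
      intro x hx1 hx2 hxt hxt1
      have h1 : affS n t x = x := by
        apply affS_val2 hn
        · intro hc; have := Meq0 hn0 hc (by omega) (by omega); omega
        · intro hc; have := Meq0 hn0 hc (by omega) (by omega); omega
      show π (affS n t x) = _
      rw [h1]
    have hp0 : ((t:ℤ), t+1) ∈ (Icc (1:ℤ) (n:ℤ) ×ˢ Icc (1:ℤ) (n:ℤ)).filter
        (fun p => p.1 < p.2) := mem_S.mpr ⟨⟨ht1, by omega⟩, ⟨by omega, by omega⟩, by omega⟩
    have hd : ¬ (π (t+1) - π t) % (n:ℤ) = 0 := by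
      apply class_ne hπ
      intro hc
      have := Meq0 hn0 hc (by omega) (by omega)
      omega
    set E := ((Icc (1:ℤ) (n:ℤ) ×ˢ Icc (1:ℤ) (n:ℤ)).filter
        (fun p => p.1 < p.2)).erase ((t:ℤ), t+1) with hE
    set F : ℤ × ℤ → ℤ × ℤ := fun p =>
      ((if p.1 = t then t+1 else if p.1 = t+1 then t else p.1),
       (if p.2 = t then t+1 else if p.2 = t+1 then t else p.2)) with hF
    have hFapp : ∀ x y : ℤ, F (x, y)
        = ((if x = t then t+1 else if x = t+1 then t else x),
           (if y = t then t+1 else if y = t+1 then t else y)) := fun x y => rfl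
    have hEmem : ∀ x y : ℤ, (x, y) ∈ E ↔
        (1 ≤ x ∧ x ≤ (n:ℤ) ∧ 1 ≤ y ∧ y ≤ (n:ℤ) ∧ x < y) ∧ ¬(x = t ∧ y = t+1) := by
      intro x y
      rw [hE, Finset.mem_erase, mem_S]
      constructor
      · rintro ⟨h1, ⟨c1, c2⟩, ⟨c3, c4⟩, c5⟩
        exact ⟨⟨c1, c2, c3, c4, c5⟩, fun ⟨a, b⟩ => h1 (by rw [a, b])⟩
      · rintro ⟨⟨c1, c2, c3, c4, c5⟩, h2⟩
        refine ⟨fun hc => h2 ?_, ⟨c1, c2⟩, ⟨c3, c4⟩, c5⟩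
        rw [Prod.mk.injEq] at hc
        exact hc
    have hsigv : ∀ x : ℤ, 1 ≤ x → x ≤ (n:ℤ) →
        σ (if x = t then t+1 else if x = t+1 then t else x) = π x := by
      intro x hx1 hx2
      split_ifs with c1 c2
      · rw [hvt1, c1]
      · rw [hvt, c2]
      · exact hvmid x hx1 hx2 c1 c2
    have hFmem : ∀ p ∈ E, F p ∈ E := by
      rintro ⟨k, l⟩ hp
      rw [hEmem] at hp
      obtain ⟨⟨a1, a2, b1, b2, hlt⟩, hne⟩ := hp
      have hne' : ¬ k = t ∨ ¬ l = t+1 := by tauto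
      rw [hFapp k l, hEmem]
      constructor
      · refine ⟨?_, ?_, ?_, ?_, ?_⟩ <;> split_ifs <;> rcases hne' with h | h <;> omega
      · rintro ⟨c, d⟩
        split_ifs at c d <;> rcases hne' with h | h <;> omega
    have hFF : ∀ p ∈ E, F (F p) = p := by
      rintro ⟨k, l⟩ _
      rw [hFapp k l, hFapp, Prod.mk.injEq]
      constructor <;> split_ifs <;> omega
    have hterm : ∀ p ∈ E, ((π p.2 - π p.1) / (n:ℤ)).natAbs
        = ((σ (F p).2 - σ (F p).1) / (n:ℤ)).natAbs := by
      rintro ⟨k, l⟩ hp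
      rw [hEmem] at hp
      obtain ⟨⟨a1, a2, b1, b2, hlt⟩, _⟩ := hp
      have e1 : (F (k, l)).1 = (if k = t then t+1 else if k = t+1 then t else k) := by
        rw [hFapp k l]
      have e2 : (F (k, l)).2 = (if l = t then t+1 else if l = t+1 then t else l) := by
        rw [hFapp k l]
      rw [e1, e2, hsigv k a1 a2, hsigv l b1 b2]
    have hmain : ∑ p ∈ E, ((π p.2 - π p.1) / (n:ℤ)).natAbs
        = ∑ p ∈ E, ((σ p.2 - σ p.1) / (n:ℤ)).natAbs :=
      Finset.sum_nbij' F F hFmem hFmem hFF hFF hterm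
    show invN n σ = invN n π + 1
    unfold invN
    rw [← Finset.add_sum_erase _ _ hp0]
    conv_rhs => rw [← Finset.add_sum_erase _ _ hp0]
    rw [← hE, ← hmain]
    have hterm0 : ((σ ((t:ℤ), t+1).2 - σ ((t:ℤ), t+1).1) / (n:ℤ)).natAbs
        = ((π ((t:ℤ), t+1).2 - π ((t:ℤ), t+1).1) / (n:ℤ)).natAbs + 1 := by
      show ((σ (t+1) - σ t) / (n:ℤ)).natAbs = ((π (t+1) - π t) / (n:ℤ)).natAbs + 1
      rw [hvt, hvt1]
      have e : π t - π (t+1) = -(π (t+1) - π t) := by ring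
      rw [e, ediv_flip hn0 hd]
      have hq : 0 ≤ (π (t+1) - π t) / (n:ℤ) := Int.ediv_nonneg (by omega) (by omega)
      omega
    rw [hterm0]
    omega

end Dem

namespace Dem

open Finset Equiv

variable {n : ℕ}

theorem window_rep (hn0 : 0 < n) (x : ℤ) :
    ∃ t : ℤ, 1 ≤ t ∧ t ≤ (n:ℤ) ∧ (t - x) % (n:ℤ) = 0 ∧ (x - t) % (n:ℤ) = 0 := by
  refine ⟨(x - 1) % (n:ℤ) + 1, ?_, ?_, ?_, ?_⟩
  · have := Int.emod_nonneg (x-1) (by omega : (n:ℤ) ≠ 0); omega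
  · have := Int.emod_lt_of_pos (x-1) (by omega : (0:ℤ) < (n:ℤ)); omega
  · have h := Int.emod_add_mul_ediv (x - 1) (n:ℤ)
    have e : (x - 1) % (n:ℤ) + 1 - x = (-((x-1) / (n:ℤ))) * n := by linear_combination h
    rw [e]
    exact md.mpr ⟨-((x-1) / (n:ℤ)), mul_comm _ _⟩
  · have h := Int.emod_add_mul_ediv (x - 1) (n:ℤ)
    have e : x - ((x - 1) % (n:ℤ) + 1) = ((x-1) / (n:ℤ)) * n := by linear_combination -h
    rw [e]
    exact md.mpr ⟨(x-1) / (n:ℤ), mul_comm _ _⟩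

theorem invN_descent (hn : 2 ≤ n) {π : Equiv.Perm ℤ} (hπ : IsAffine n π) (i : ℤ)
    (h : π (i+1) < π i) : invN n (π * affS n i) + 1 = invN n π := by
  have hσ : IsAffine n (π * affS n i) := isAffine_mul hπ (isAffine_affS i)
  have hasc : (π * affS n i) i < (π * affS n i) (i+1) := by
    have e1 : (π * affS n i) i = π (i+1) := by
      show π (affS n i i) = _
      rw [affS_val0 hn (by simp)]
    have e2 : (π * affS n i) (i+1) = π i := by
      show π (affS n i (i+1)) = _
      have h1 : affS n i (i+1) = i + 1 - 1 := affS_val1 hn (by simp)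
      rw [h1]
      norm_num
    omega
  have key := invN_ascent hn hσ i hasc
  have e : (π * affS n i) * affS n i = π := by rw [mul_assoc, affS_mul_self, mul_one]
  rw [e] at key
  omega

theorem window_ne {π : Equiv.Perm ℤ} (i : ℤ) : π i ≠ π (i+1) := by
  intro hc
  have := π.injective hc
  omega

theorem eq_one_of_no_descent (hn0 : 0 < n) {π : Equiv.Perm ℤ} (hπ : IsAffine n π)
    (h : ∀ j : ℤ, 1 ≤ j → j ≤ (n:ℤ) → π j < π (j+1)) : π = 1 := by
  have hall : ∀ x : ℤ, π x < π (x+1) := by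
    intro x
    obtain ⟨t, ht1, ht2, htc, _⟩ := window_rep hn0 x
    have e : (x - t) % (n:ℤ) = 0 := by
      have h2 := Msub (show ((0:ℤ)) % (n:ℤ) = 0 by simp) htc
      have e2 : 0 - (t - x) = x - t := by ring
      rwa [e2] at h2
    exact ascent_congr hn0 hπ.1 e (h t ht1 ht2)
  have hgm : Monotone (fun x : ℤ => π x - x) := by
    apply monotone_int_of_le_succ
    intro x
    have := hall x
    show π x - x ≤ π (x+1) - (x+1)
    omega
  have hgend : π ((n:ℤ)+1) - ((n:ℤ)+1) = π 1 - 1 := by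
    have e : (n:ℤ) + 1 = 1 + (n:ℤ) := by ring
    rw [e, hπ.1 1]
    ring
  have hg : ∀ k : ℤ, 1 ≤ k → k ≤ (n:ℤ) → π k = k + (π 1 - 1) := by
    intro k hk1 hk2
    have h1 : π 1 - 1 ≤ π k - k := hgm (by omega : (1:ℤ) ≤ k)
    have h2 : π k - k ≤ π ((n:ℤ)+1) - ((n:ℤ)+1) := hgm (by omega : k ≤ (n:ℤ)+1)
    omega
  have hcard : (Icc (1:ℤ) (n:ℤ)).card = n := by
    rw [Int.card_Icc]
    omega
  have hsum2 : ∑ k ∈ Icc (1:ℤ) (n:ℤ), (k + (π 1 - 1)) = ∑ k ∈ Icc (1:ℤ) (n:ℤ), k := by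
    calc ∑ k ∈ Icc (1:ℤ) (n:ℤ), (k + (π 1 - 1))
        = ∑ k ∈ Icc (1:ℤ) (n:ℤ), π k :=
          Finset.sum_congr rfl (fun k hk => by
            rw [Finset.mem_Icc] at hk
            exact (hg k hk.1 hk.2).symm)
      _ = _ := hπ.2
  rw [Finset.sum_add_distrib, Finset.sum_const, hcard, nsmul_eq_mul] at hsum2
  have hc0 : π 1 - 1 = 0 := by
    have h' : (n:ℤ) * (π 1 - 1) = 0 := by linarith
    rcases mul_eq_zero.mp h' with h | h
    · exfalso; omega
    · exact h
  ext x
  show π x = x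
  obtain ⟨t, ht1, ht2, htc, hxc⟩ := window_rep hn0 x
  obtain ⟨m, hm, hv⟩ := apply_rep hπ.1 hxc
  rw [hv, hg t ht1 ht2]
  omega

theorem exists_descent (hn0 : 0 < n) {π : Equiv.Perm ℤ} (hπ : IsAffine n π) (hne : π ≠ 1) :
    ∃ j : ℤ, 1 ≤ j ∧ j ≤ (n:ℤ) ∧ π (j+1) < π j := by
  by_contra hc
  push_neg at hc
  apply hne
  apply eq_one_of_no_descent hn0 hπ
  intro j hj1 hj2
  have h1 := hc j hj1 hj2
  have h2 := window_ne (π := π) j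
  omega

theorem invN_one : invN n 1 = 0 := by
  unfold invN
  apply Finset.sum_eq_zero
  intro p hp
  rw [mem_S] at hp
  obtain ⟨⟨a1, a2⟩, ⟨b1, b2⟩, hlt⟩ := hp
  simp only [Equiv.Perm.one_apply]
  rw [Int.ediv_eq_zero_of_lt (by omega) (by omega)]
  rfl

theorem word_prod_affine (w : List ℤ) : IsAffine n ((w.map (affS n)).prod) := by
  induction w with
  | nil => exact isAffine_one
  | cons x t ih =>
      rw [List.map_cons, List.prod_cons]
      exact isAffine_mul (isAffine_affS x) ih

theorem invN_le_length (hn : 2 ≤ n) (w : List ℤ) :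
    invN n ((w.map (affS n)).prod) ≤ w.length := by
  induction w using List.reverseRecOn with
  | nil => simp [invN_one]
  | append_singleton l a ih =>
      rw [List.map_append, List.prod_append]
      simp only [List.map_cons, List.map_nil, List.prod_cons, List.prod_nil, mul_one]
      set u : Equiv.Perm ℤ := (l.map (affS n)).prod with hu
      have hua : IsAffine n u := word_prod_affine l
      rw [List.length_append]
      simp only [List.length_cons, List.length_nil]
      by_cases h : u a < u (a+1)
      · rw [invN_ascent hn hua a h]
        omega
      · have hne := window_ne (π := u) a
        have hdesc : u (a+1) < u a := by omega
        have := invN_descent hn hua a hdesc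
        omega

theorem exists_word_aux (hn : 2 ≤ n) :
    ∀ N : ℕ, ∀ π : Equiv.Perm ℤ, IsAffine n π → invN n π = N →
    ∃ w : List ℤ, (∀ x ∈ w, 1 ≤ x ∧ x ≤ (n:ℤ)) ∧ (w.map (affS n)).prod = π ∧
      w.length = invN n π := by
  intro N
  induction N using Nat.strong_induction_on with
  | _ N ih =>
      intro π hπ hN
      by_cases hone : π = 1
      · refine ⟨[], by simp, by simp [hone], ?_⟩
        rw [hone, invN_one]
        rfl
      · obtain ⟨j, hj1, hj2, hdesc⟩ := exists_descent (by omega) hπ hone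
        set σ : Equiv.Perm ℤ := π * affS n j with hσ
        have hσa : IsAffine n σ := isAffine_mul hπ (isAffine_affS j)
        have hstep : invN n σ + 1 = invN n π := invN_descent hn hπ j hdesc
        obtain ⟨w', hw1, hw2, hw3⟩ := ih (invN n σ) (by omega) σ hσa rfl
        refine ⟨w' ++ [j], ?_, ?_, ?_⟩
        · intro x hx
          rcases List.mem_append.mp hx with h | h
          · exact hw1 x h
          · rw [List.mem_singleton] at h
            subst h
            exact ⟨hj1, hj2⟩
        · rw [List.map_append, List.prod_append]
          simp only [List.map_cons, List.map_nil, List.prod_cons, List.prod_nil, mul_one]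
          rw [hw2, hσ, mul_assoc, affS_mul_self, mul_one]
        · rw [List.length_append]
          simp only [List.length_cons, List.length_nil]
          omega

theorem exists_word (hn : 2 ≤ n) {π : Equiv.Perm ℤ} (hπ : IsAffine n π) :
    ∃ w : List ℤ, (∀ x ∈ w, 1 ≤ x ∧ x ≤ (n:ℤ)) ∧ (w.map (affS n)).prod = π ∧
      w.length = invN n π :=
  exists_word_aux hn (invN n π) π hπ rfl

theorem wordLength_eq (hn : 2 ≤ n) {π : Equiv.Perm ℤ} (hπ : IsAffine n π) :
    wordLength n π = invN n π := by
  obtain ⟨w, hw1, hw2, hw3⟩ := exists_word hn hπ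
  apply Nat.le_antisymm
  · exact Nat.sInf_le ⟨w, hw1, hw2, hw3⟩
  · have hne : {l : ℕ | ∃ w : List ℤ,
        (∀ x ∈ w, 1 ≤ x ∧ x ≤ (n:ℤ)) ∧ (w.map (affS n)).prod = π ∧ w.length = l}.Nonempty :=
      ⟨w.length, w, hw1, hw2, rfl⟩
    obtain ⟨w', hw1', hw2', hw3'⟩ := Nat.sInf_mem hne
    calc invN n π = invN n ((w'.map (affS n)).prod) := by rw [hw2']
    _ ≤ w'.length := invN_le_length hn w'
    _ = _ := hw3'

theorem wordLength_one (hn : 2 ≤ n) : wordLength n (1 : Equiv.Perm ℤ) = 0 := by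
  rw [wordLength_eq hn isAffine_one, invN_one]

theorem wordLength_affS (hn : 2 ≤ n) (i : ℤ) : wordLength n (affS n i) = 1 := by
  rw [wordLength_eq hn (isAffine_affS i)]
  have h := invN_ascent hn (π := 1) isAffine_one i (by
    simp only [Equiv.Perm.one_apply]; omega)
  rw [one_mul, invN_one] at h
  omega

theorem wordLength_mul_le (hn : 2 ≤ n) {a b : Equiv.Perm ℤ} (ha : IsAffine n a)
    (hb : IsAffine n b) : wordLength n (a * b) ≤ wordLength n a + wordLength n b := by
  obtain ⟨wa, ha1, ha2, ha3⟩ := exists_word hn ha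
  obtain ⟨wb, hb1, hb2, hb3⟩ := exists_word hn hb
  have : wordLength n (a*b) ≤ (wa ++ wb).length := by
    apply Nat.sInf_le
    refine ⟨wa ++ wb, ?_, ?_, rfl⟩
    · intro x hx
      rcases List.mem_append.mp hx with h | h
      · exact ha1 x h
      · exact hb1 x h
    · rw [List.map_append, List.prod_append, ha2, hb2]
  rw [List.length_append] at this
  rw [wordLength_eq hn ha, wordLength_eq hn hb]
  omega

theorem prod_map_reverse (w : List ℤ) :
    ((w.map (affS n)).prod)⁻¹ = (w.reverse.map (affS n)).prod := by
  induction w with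
  | nil => simp
  | cons x t ih =>
      rw [List.map_cons, List.prod_cons, mul_inv_rev, ih, List.reverse_cons,
        List.map_append, List.prod_append]
      simp [affS_inv]

theorem wordLength_inv (hn : 2 ≤ n) {π : Equiv.Perm ℤ} (hπ : IsAffine n π) :
    wordLength n π⁻¹ = wordLength n π := by
  have key : ∀ ρ : Equiv.Perm ℤ, IsAffine n ρ → wordLength n ρ⁻¹ ≤ wordLength n ρ := by
    intro ρ hρ
    obtain ⟨w, h1, h2, h3⟩ := exists_word hn hρ
    apply Nat.sInf_le
    refine ⟨w.reverse, ?_, ?_, ?_⟩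
    · intro x hx
      exact h1 x (List.mem_reverse.mp hx)
    · rw [← prod_map_reverse, h2]
    · rw [List.length_reverse, h3, ← wordLength_eq hn hρ]
  have h1 := key π hπ
  have h2 := key π⁻¹ (isAffine_inv hπ)
  rw [inv_inv] at h2
  omega

/-- length-based descent/ascent criteria -/
theorem ascent_iff_wl (hn : 2 ≤ n) {π : Equiv.Perm ℤ} (hπ : IsAffine n π) (i : ℤ) :
    π i < π (i+1) ↔ wordLength n (π * affS n i) = wordLength n π + 1 := by
  have hσ := isAffine_mul hπ (isAffine_affS i)
  rw [wordLength_eq hn hσ, wordLength_eq hn hπ]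
  constructor
  · intro h
    exact invN_ascent hn hπ i h
  · intro h
    by_contra hc
    have hne := window_ne (π := π) i
    have hdesc : π (i+1) < π i := by omega
    have := invN_descent hn hπ i hdesc
    omega

end Dem

namespace Dem

open Finset Equiv

variable {n : ℕ}

theorem Mneg_iff {a : ℤ} : (-a) % (n:ℤ) = 0 ↔ a % (n:ℤ) = 0 := by
  rw [md, md, dvd_neg]

theorem Mn1 (hn : 2 ≤ n) : ¬ (1:ℤ) % (n:ℤ) = 0 := one_mod_ne hn

theorem Mn1' (hn : 2 ≤ n) : ¬ (-1:ℤ) % (n:ℤ) = 0 := fun hc =>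
  one_mod_ne hn (Mneg_iff.mp hc)

theorem Mn2' (h2 : ¬ (2:ℤ) % (n:ℤ) = 0) : ¬ (-2:ℤ) % (n:ℤ) = 0 := fun hc =>
  h2 (Mneg_iff.mp hc)

theorem Mof {a b d : ℤ} (c0 : a % (n:ℤ) = 0) (e : b - a = d) (hd : d % (n:ℤ) = 0) :
    b % (n:ℤ) = 0 := by
  have h2 := Madd c0 hd
  rwa [show a + d = b by omega] at h2

theorem Mnotof {a b d : ℤ} (c0 : a % (n:ℤ) = 0) (e : b - a = d) (hd : ¬ d % (n:ℤ) = 0) :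
    ¬ b % (n:ℤ) = 0 := fun hc => hd (by
  have h2 := Msub hc c0
  rwa [e] at h2)

/-- window-value lemmas for right multiplication -/
theorem mulSp_p (hn : 2 ≤ n) (c : Equiv.Perm ℤ) (p : ℤ) :
    (c * affS n p) p = c (p+1) := by
  show c (affS n p p) = _
  rw [affS_val0 hn (by simp)]

theorem mulSp_p1 (hn : 2 ≤ n) (c : Equiv.Perm ℤ) (p : ℤ) :
    (c * affS n p) (p+1) = c p := by
  show c (affS n p (p+1)) = _
  have h1 : affS n p (p+1) = p + 1 - 1 := affS_val1 hn (by simp)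
  rw [h1]
  norm_num

theorem mulSp_gen (hn : 2 ≤ n) (c : Equiv.Perm ℤ) (p x : ℤ)
    (h0 : ¬ (x - p) % (n:ℤ) = 0) (h1 : ¬ (x - p - 1) % (n:ℤ) = 0) :
    (c * affS n p) x = c x := by
  show c (affS n p x) = _
  rw [affS_val2 hn h0 h1]

theorem mulSp_p2 (hn : 2 ≤ n) (h2 : ¬ (2:ℤ) % (n:ℤ) = 0) (c : Equiv.Perm ℤ) (p : ℤ) :
    (c * affS n p) (p+2) = c (p+2) := by
  apply mulSp_gen hn
  · intro hc
    exact h2 (by rwa [show p + 2 - p = 2 by ring] at hc)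
  · intro hc
    exact Mn1 hn (by rwa [show p + 2 - p - 1 = 1 by ring] at hc)

theorem mulSq_p (hn : 2 ≤ n) (h2 : ¬ (2:ℤ) % (n:ℤ) = 0) (c : Equiv.Perm ℤ) (p : ℤ) :
    (c * affS n (p+1)) p = c p := by
  apply mulSp_gen hn
  · intro hc
    exact Mn1' hn (by rwa [show p - (p+1) = -1 by ring] at hc)
  · intro hc
    exact Mn2' h2 (by rwa [show p - (p+1) - 1 = -2 by ring] at hc)

theorem mulSq_p1 (hn : 2 ≤ n) (c : Equiv.Perm ℤ) (p : ℤ) :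
    (c * affS n (p+1)) (p+1) = c (p+2) := by
  have h := mulSp_p hn c (p+1)
  rwa [show p + 1 + 1 = p + 2 by ring] at h

theorem mulSq_p2 (hn : 2 ≤ n) (c : Equiv.Perm ℤ) (p : ℤ) :
    (c * affS n (p+1)) (p+2) = c (p+1) := by
  have h := mulSp_p1 hn c (p+1)
  rwa [show p + 1 + 1 = p + 2 by ring] at h

/-- the group braid relation -/
theorem affS_braid (hn : 2 ≤ n) (h2 : ¬ (2:ℤ) % (n:ℤ) = 0) (p : ℤ) :
    affS n p * affS n (p+1) * affS n p = affS n (p+1) * affS n p * affS n (p+1) := by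
  ext k
  simp only [Equiv.Perm.mul_apply]
  by_cases c0 : (k - p) % (n:ℤ) = 0
  · rw [affS_val2 hn (Mnotof c0 (show k - (p+1) - (k - p) = -1 by ring) (Mn1' hn))
        (Mnotof c0 (show k - (p+1) - 1 - (k - p) = -2 by ring) (Mn2' h2))]
    rw [affS_val0 hn c0]
    rw [affS_val0 hn (Mof c0 (show k + 1 - (p+1) - (k - p) = 0 by ring) (by simp))]
    rw [affS_val2 hn (Mnotof c0 (show k + 1 + 1 - p - (k - p) = 2 by ring) h2)
        (Mnotof c0 (show k + 1 + 1 - p - 1 - (k - p) = 1 by ring) (Mn1 hn))]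
  · by_cases c1 : (k - p - 1) % (n:ℤ) = 0
    · rw [affS_val0 hn (Mof c1 (show k - (p+1) - (k - p - 1) = 0 by ring) (by simp))]
      rw [affS_val1 hn c1]
      rw [affS_val2 hn (Mnotof c1 (show k - 1 - (p+1) - (k - p - 1) = -1 by ring) (Mn1' hn))
          (Mnotof c1 (show k - 1 - (p+1) - 1 - (k - p - 1) = -2 by ring) (Mn2' h2))]
      rw [affS_val2 hn (Mnotof c1 (show k + 1 - p - (k - p - 1) = 2 by ring) h2)
          (Mnotof c1 (show k + 1 - p - 1 - (k - p - 1) = 1 by ring) (Mn1 hn))]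
      rw [affS_val0 hn (Mof c1 (show k - 1 - p - (k - p - 1) = 0 by ring) (by simp))]
      rw [affS_val1 hn (Mof c1 (show k + 1 - (p+1) - 1 - (k - p - 1) = 0 by ring) (by simp))]
      omega
    · by_cases c2 : (k - p - 2) % (n:ℤ) = 0
      · rw [affS_val2 hn c0 c1]
        rw [affS_val1 hn (Mof c2 (show k - (p+1) - 1 - (k - p - 2) = 0 by ring) (by simp))]
        rw [affS_val1 hn (Mof c2 (show k - 1 - p - 1 - (k - p - 2) = 0 by ring) (by simp))]
        rw [affS_val2 hn
            (Mnotof c2 (show k - 1 - 1 - (p+1) - (k - p - 2) = -1 by ring) (Mn1' hn))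
            (Mnotof c2 (show k - 1 - 1 - (p+1) - 1 - (k - p - 2) = -2 by ring) (Mn2' h2))]
      · have d1 : ¬ (k - (p+1)) % (n:ℤ) = 0 := fun hc =>
          c1 (by rwa [show k - (p+1) = k - p - 1 by ring] at hc)
        have d2 : ¬ (k - (p+1) - 1) % (n:ℤ) = 0 := fun hc =>
          c2 (by rwa [show k - (p+1) - 1 = k - p - 2 by ring] at hc)
        rw [affS_val2 hn c0 c1, affS_val2 hn d1 d2, affS_val2 hn c0 c1, affS_val2 hn d1 d2]

/-- the commuting relation for distant classes -/
theorem affS_comm' (hn : 2 ≤ n) {p q : ℤ} (h1 : ¬ (q - p) % (n:ℤ) = 0)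
    (h2 : ¬ (q - p - 1) % (n:ℤ) = 0) (h3 : ¬ (p - q - 1) % (n:ℤ) = 0) :
    affS n p * affS n q = affS n q * affS n p := by
  ext k
  simp only [Equiv.Perm.mul_apply]
  by_cases c0 : (k - p) % (n:ℤ) = 0
  · -- k ≡ p : s_q fixes k and k+1
    have f1 : ¬ (k - q) % (n:ℤ) = 0 := fun hc => h1 (by
      have := Msub c0 hc
      rwa [show k - p - (k - q) = q - p by ring] at this)
    have f2 : ¬ (k - q - 1) % (n:ℤ) = 0 := fun hc => h3 (by
      have := Msub c0 hc
      rw [show k - p - (k - q - 1) = -(p - q - 1) by ring] at this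
      exact Mneg_iff.mp this)
    have f3 : ¬ (k + 1 - q) % (n:ℤ) = 0 := fun hc => h2 (by
      have := Msub hc c0
      rw [show k + 1 - q - (k - p) = -(q - p - 1) by ring] at this
      exact Mneg_iff.mp this)
    have f4 : ¬ (k + 1 - q - 1) % (n:ℤ) = 0 := fun hc => h1 (by
      have := Msub hc c0
      rw [show k + 1 - q - 1 - (k - p) = -(q - p) by ring] at this
      exact Mneg_iff.mp this)
    rw [affS_val2 hn f1 f2, affS_val0 hn c0, affS_val2 hn f3 f4]
  · by_cases c1 : (k - p - 1) % (n:ℤ) = 0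
    · -- k ≡ p + 1
      have f1 : ¬ (k - q) % (n:ℤ) = 0 := fun hc => h2 (by
        have := Msub c1 hc
        rwa [show k - p - 1 - (k - q) = q - p - 1 by ring] at this)
      have f2 : ¬ (k - q - 1) % (n:ℤ) = 0 := fun hc => by
        have := Msub c1 hc
        rw [show k - p - 1 - (k - q - 1) = q - p by ring] at this
        exact h1 this
      have f3 : ¬ (k - 1 - q) % (n:ℤ) = 0 := fun hc => h1 (by
        have := Msub c1 hc
        rwa [show k - p - 1 - (k - 1 - q) = q - p by ring] at this)
      have f4 : ¬ (k - 1 - q - 1) % (n:ℤ) = 0 := fun hc => h3 (by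
        have := Msub c1 hc
        rw [show k - p - 1 - (k - 1 - q - 1) = -(p - q - 1) by ring] at this
        exact Mneg_iff.mp this)
      rw [affS_val2 hn f1 f2, affS_val1 hn c1, affS_val2 hn f3 f4]
    · by_cases d0 : (k - q) % (n:ℤ) = 0
      · have f1 : ¬ (k + 1 - p) % (n:ℤ) = 0 := fun hc => by
          have := Msub hc d0
          rw [show k + 1 - p - (k - q) = q - p + 1 by ring] at this
          exact h3 (by
            have := Mneg_iff.mpr this
            rwa [show -(q - p + 1) = p - q - 1 by ring] at this)
        have f2 : ¬ (k + 1 - p - 1) % (n:ℤ) = 0 := fun hc => c0 (by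
          rwa [show k + 1 - p - 1 = k - p by ring] at hc)
        rw [affS_val0 hn d0, affS_val2 hn c0 c1, affS_val0 hn d0, affS_val2 hn f1 f2]
      · by_cases d1 : (k - q - 1) % (n:ℤ) = 0
        · have f1 : ¬ (k - 1 - p) % (n:ℤ) = 0 := fun hc => by
            have := Msub d1 hc
            rw [show k - q - 1 - (k - 1 - p) = p - q by ring] at this
            exact h1 (by
              have := Mneg_iff.mpr this
              rwa [show -(p - q) = q - p by ring] at this)
          have f2 : ¬ (k - 1 - p - 1) % (n:ℤ) = 0 := fun hc => by
            have := Msub d1 hc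
            rw [show k - q - 1 - (k - 1 - p - 1) = p - q + 1 by ring] at this
            exact h2 (by
              have := Mneg_iff.mpr this
              rwa [show -(p - q + 1) = q - p - 1 by ring] at this)
          rw [affS_val1 hn d1, affS_val2 hn c0 c1, affS_val1 hn d1, affS_val2 hn f1 f2]
        · rw [affS_val2 hn d0 d1, affS_val2 hn c0 c1, affS_val2 hn d0 d1]

end Dem

namespace Dem

open Finset Equiv

variable {n : ℕ}

/-- the 0-Hecke operator `R_i` (right multiplication if ascent) -/
noncomputable def Rop (n : ℕ) (i : ℤ) (c : AffPerm n) : AffPerm n :=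
  if c.val i < c.val (i+1) then ⟨c.val * affS n i, isAffine_mul c.2 (isAffine_affS i)⟩ else c

theorem Rop_val (i : ℤ) (c : AffPerm n) :
    (Rop n i c).val = if c.val i < c.val (i+1) then c.val * affS n i else c.val := by
  rw [Rop]
  split_ifs <;> rfl

theorem Rop_of_ascent {i : ℤ} {c : AffPerm n} (h : c.val i < c.val (i+1)) :
    (Rop n i c).val = c.val * affS n i := by rw [Rop_val, if_pos h]

theorem Rop_of_descent {i : ℤ} {c : AffPerm n} (h : ¬ c.val i < c.val (i+1)) :
    Rop n i c = c := by rw [Rop, if_neg h]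

theorem apply_pair_rep (hn0 : 0 < n) {π : Equiv.Perm ℤ}
    (hπ1 : ∀ x : ℤ, π (x + n) = π x + n) {i t : ℤ} (h : (t - i) % (n:ℤ) = 0) :
    ∃ m : ℤ, π t = π i + m * n ∧ π (t+1) = π (i+1) + m * n := by
  obtain ⟨m, hm, hv⟩ := apply_rep hπ1 h
  have h2 : (t + 1 - (i+1)) % (n:ℤ) = 0 := by
    rwa [show t + 1 - (i+1) = t - i by ring]
  obtain ⟨m', hm', hv'⟩ := apply_rep hπ1 h2
  refine ⟨m, hv, ?_⟩
  have e : (m' - m) * (n:ℤ) = 0 := by linear_combination hm - hm'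
  rcases mul_eq_zero.mp e with h | h
  · have hme : m' = m := by omega
    rw [hv', hme]
  · exact absurd h (by omega)

theorem Rop_congr (hn : 2 ≤ n) {i i' : ℤ} (hii : (i - i') % (n:ℤ) = 0) (c : AffPerm n) :
    Rop n i c = Rop n i' c := by
  obtain ⟨m, hv, hv'⟩ := apply_pair_rep (by omega) c.2.1 hii
  have htest : (c.val i < c.val (i+1)) ↔ (c.val i' < c.val (i'+1)) := by
    rw [hv, hv']
    omega
  have hS : affS n i = affS n i' := affS_congr hn hii
  by_cases h : c.val i' < c.val (i'+1)
  · apply Subtype.ext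
    rw [Rop_of_ascent (htest.mpr h), Rop_of_ascent h, hS]
  · rw [Rop_of_descent (fun hc => h (htest.mp hc)), Rop_of_descent h]

theorem Rop_descent_after (hn : 2 ≤ n) (i : ℤ) (c : AffPerm n) :
    (Rop n i c).val (i+1) < (Rop n i c).val i := by
  by_cases h : c.val i < c.val (i+1)
  · rw [Rop_of_ascent h, mulSp_p hn, mulSp_p1 hn]
    exact h
  · rw [Rop_of_descent h]
    have := window_ne (π := c.val) i
    omega

theorem Rop_comm (hn : 2 ≤ n) {p q : ℤ} (hq1 : ¬ (q - p) % (n:ℤ) = 0)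
    (hq2 : ¬ (q - p - 1) % (n:ℤ) = 0) (hq3 : ¬ (p - q - 1) % (n:ℤ) = 0) (c : AffPerm n) :
    Rop n p (Rop n q c) = Rop n q (Rop n p c) := by
  have vqp : ∀ u : Equiv.Perm ℤ, (u * affS n q) p = u p := fun u =>
    mulSp_gen hn u q p
      (fun hc => hq1 (by
        have := Msub hc (show ((0:ℤ)) % (n:ℤ) = 0 by simp)
        rw [show p - q - 0 = -(q - p) by ring] at this
        exact Mneg_iff.mp this))
      (fun hc => hq3 (by rwa [show p - q - 1 = p - q - 1 by ring] at hc))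
  have vqp1 : ∀ u : Equiv.Perm ℤ, (u * affS n q) (p+1) = u (p+1) := fun u =>
    mulSp_gen hn u q (p+1)
      (fun hc => hq2 (by
        rw [show p + 1 - q = -(q - p - 1) by ring] at hc
        exact Mneg_iff.mp hc))
      (fun hc => hq1 (by
        rw [show p + 1 - q - 1 = -(q - p) by ring] at hc
        exact Mneg_iff.mp hc))
  have vpq : ∀ u : Equiv.Perm ℤ, (u * affS n p) q = u q := fun u =>
    mulSp_gen hn u p q hq1 hq2
  have vpq1 : ∀ u : Equiv.Perm ℤ, (u * affS n p) (q+1) = u (q+1) := fun u =>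
    mulSp_gen hn u p (q+1)
      (fun hc => hq3 (by
        rw [show q + 1 - p = -(p - q - 1) by ring] at hc
        exact Mneg_iff.mp hc))
      (fun hc => hq1 (by rwa [show q + 1 - p - 1 = q - p by ring] at hc))
  have hcomm := affS_comm' hn hq1 hq2 hq3
  apply Subtype.ext
  simp only [Rop_val]
  split_ifs with h1 h2 h3 h4 <;>
    (try simp only [vqp, vqp1, vpq, vpq1] at *) <;>
    first
      | rfl
      | (exfalso; omega)
      | (simp only [mul_assoc]; rw [hcomm])
      | (simp only [mul_assoc]; rw [← hcomm])

theorem Rop_braid (hn : 2 ≤ n) (h2 : ¬ (2:ℤ) % (n:ℤ) = 0) (p : ℤ) (c : AffPerm n) :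
    Rop n p (Rop n (p+1) (Rop n p c)) = Rop n (p+1) (Rop n p (Rop n (p+1) c)) := by
  have hpp : p + 1 + 1 = p + 2 := by ring
  have hxy := window_ne (π := c.val) p
  have hyz := window_ne (π := c.val) (p+1)
  rw [hpp] at hyz
  have hxz : c.val p ≠ c.val (p+2) := fun hc => by
    have := c.val.injective hc
    omega
  have hb := affS_braid hn h2 p
  simp only [mul_assoc] at hb
  apply Subtype.ext
  simp only [Rop_val]
  split_ifs <;>
    (try simp only [hpp, mulSp_p hn, mulSp_p1 hn, mulSp_p2 hn h2,
      mulSq_p hn h2, mulSq_p1 hn, mulSq_p2 hn] at *) <;>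
    first
      | rfl
      | (exfalso; omega)
      | (simp only [mul_assoc]; rw [hb])
      | (simp only [mul_assoc]; rw [← hb])

end Dem

namespace Dem

open Finset Equiv

variable {n : ℕ}

theorem affine_n1 {π : Equiv.Perm ℤ} (hπ : IsAffine 1 π) : π = 1 := by
  apply eq_one_of_no_descent one_pos hπ
  intro j h1 h2
  have h3 : j = 1 := by
    have : ((1:ℕ):ℤ) = 1 := by norm_num
    omega
  subst h3
  have h4 := hπ.1 1
  simp only [Nat.cast_one] at h4
  omega

/-- right multiplication by a simple reflection, inside the subgroup -/
noncomputable def bS (b : AffPerm n) (i : ℤ) : AffPerm n :=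
  ⟨b.val * affS n i, isAffine_mul b.2 (isAffine_affS i)⟩

theorem bS_congr (hn : 2 ≤ n) (b : AffPerm n) {i i' : ℤ} (h : (i - i') % (n:ℤ) = 0) :
    bS b i = bS b i' := by
  apply Subtype.ext
  show b.val * affS n i = b.val * affS n i'
  rw [affS_congr hn h]

theorem invN_bS_descent (hn : 2 ≤ n) {b : AffPerm n} {i : ℤ}
    (h : b.val (i+1) < b.val i) : invN n (bS b i).val + 1 = invN n b.val :=
  invN_descent hn b.2 i h

/-- the descent set in the fundamental window -/
theorem descent_nonempty (hn : 2 ≤ n) {b : AffPerm n} {i : ℤ} (h : b.val (i+1) < b.val i) :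
    ((Icc (1:ℤ) (n:ℤ)).filter (fun j => b.val (j+1) < b.val j)).Nonempty := by
  obtain ⟨t, ht1, ht2, htc, hti⟩ := window_rep (n := n) (by omega) i
  obtain ⟨m, hv, hv'⟩ := apply_pair_rep (by omega) b.2.1 htc
  refine ⟨t, Finset.mem_filter.mpr ⟨Finset.mem_Icc.mpr ⟨ht1, ht2⟩, ?_⟩⟩
  rw [hv, hv']
  exact add_lt_add_left h _

/-- the Demazure product, defined by recursion on the inversion number of `b`,
always stripping the smallest descent in the window -/
noncomputable def Dem (n : ℕ) (a b : AffPerm n) : AffPerm n :=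
  if h : ((Icc (1:ℤ) (n:ℤ)).filter (fun j => b.val (j+1) < b.val j)).Nonempty then
    have hmem := Finset.min'_mem _ h
    have hj := Finset.mem_filter.mp hmem
    have hjw := Finset.mem_Icc.mp hj.1
    have hn2 : 2 ≤ n := by
      rcases Nat.lt_or_ge n 2 with hlt | hge
      · exfalso
        interval_cases n
        · have hcast : ((0:ℕ):ℤ) = 0 := by norm_num
          omega
        · have hb1 : ∀ x : ℤ, b.val x = x := fun x => by
            rw [affine_n1 b.2]
            rfl
          have hcon := hj.2
          rw [hb1, hb1] at hcon
          omega
      · exact hge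
    Rop n (((Icc (1:ℤ) (n:ℤ)).filter (fun j => b.val (j+1) < b.val j)).min' h)
      (Dem n a (bS b (((Icc (1:ℤ) (n:ℤ)).filter (fun j => b.val (j+1) < b.val j)).min' h)))
  else a
termination_by invN n b.val
decreasing_by
  · have := invN_bS_descent hn2 hj.2
    omega

theorem Dem_empty (a b : AffPerm n)
    (h : ¬ ((Icc (1:ℤ) (n:ℤ)).filter (fun j => b.val (j+1) < b.val j)).Nonempty) :
    Dem n a b = a := by
  rw [Dem, dif_neg h]

theorem Dem_step (a b : AffPerm n)
    (h : ((Icc (1:ℤ) (n:ℤ)).filter (fun j => b.val (j+1) < b.val j)).Nonempty) :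
    Dem n a b = Rop n (((Icc (1:ℤ) (n:ℤ)).filter (fun j => b.val (j+1) < b.val j)).min' h)
      (Dem n a (bS b (((Icc (1:ℤ) (n:ℤ)).filter (fun j => b.val (j+1) < b.val j)).min' h))) := by
  rw [Dem, dif_pos h]

theorem Dem_of_val_one (a b : AffPerm n) (hb : b.val = 1) : Dem n a b = a := by
  apply Dem_empty
  intro ⟨j, hj⟩
  rw [Finset.mem_filter, hb] at hj
  exact absurd hj.2 (by simp)

theorem two_mod_ne_of_chain (hn : 2 ≤ n) {π : Equiv.Perm ℤ} (hπ : IsAffine n π) {p : ℤ}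
    (hd1 : π (p+1) < π p) (hd2 : π (p+2) < π (p+1)) : ¬ (2:ℤ) % (n:ℤ) = 0 := by
  intro hc
  have hle : (n:ℤ) ≤ 2 := Int.le_of_dvd (by omega) (md.mp hc)
  have hn2 : n = 2 := by omega
  have h := hπ.1 p
  rw [hn2] at h
  have hcast : ((2:ℕ):ℤ) = 2 := by norm_num
  rw [hcast] at h
  omega

/-- key: commuting case of descent-independence -/
theorem Dem_comm_case (hn : 2 ≤ n) {p q : ℤ} (hq1 : ¬ (q - p) % (n:ℤ) = 0)
    (hq2 : ¬ (q - p - 1) % (n:ℤ) = 0) (hq3 : ¬ (p - q - 1) % (n:ℤ) = 0)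
    (b : AffPerm n) (a : AffPerm n)
    (hd1 : b.val (p+1) < b.val p) (hd2 : b.val (q+1) < b.val q)
    (IH : ∀ b' : AffPerm n, invN n b'.val < invN n b.val → ∀ (a : AffPerm n) (i : ℤ),
      b'.val (i+1) < b'.val i → Dem n a b' = Rop n i (Dem n a (bS b' i))) :
    Rop n p (Dem n a (bS b p)) = Rop n q (Dem n a (bS b q)) := by
  have vqp : ∀ u : Equiv.Perm ℤ, (u * affS n q) p = u p := fun u =>
    mulSp_gen hn u q p
      (fun hc => hq1 (by
        rw [show p - q = -(q - p) by ring] at hc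
        exact Mneg_iff.mp hc))
      (fun hc => hq3 hc)
  have vqp1 : ∀ u : Equiv.Perm ℤ, (u * affS n q) (p+1) = u (p+1) := fun u =>
    mulSp_gen hn u q (p+1)
      (fun hc => hq2 (by
        rw [show p + 1 - q = -(q - p - 1) by ring] at hc
        exact Mneg_iff.mp hc))
      (fun hc => hq1 (by
        rw [show p + 1 - q - 1 = -(q - p) by ring] at hc
        exact Mneg_iff.mp hc))
  have vpq : ∀ u : Equiv.Perm ℤ, (u * affS n p) q = u q := fun u =>
    mulSp_gen hn u p q hq1 hq2
  have vpq1 : ∀ u : Equiv.Perm ℤ, (u * affS n p) (q+1) = u (q+1) := fun u =>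
    mulSp_gen hn u p (q+1)
      (fun hc => hq3 (by
        rw [show q + 1 - p = -(p - q - 1) by ring] at hc
        exact Mneg_iff.mp hc))
      (fun hc => hq1 (by rwa [show q + 1 - p - 1 = q - p by ring] at hc))
  have hN1 := invN_bS_descent hn (b := b) hd1
  have hN2 := invN_bS_descent hn (b := b) hd2
  -- descents of the once-multiplied elements
  have hd12 : (bS b p).val (q+1) < (bS b p).val q := by
    show (b.val * affS n p) (q+1) < (b.val * affS n p) q
    rw [vpq, vpq1]
    exact hd2
  have hd21 : (bS b q).val (p+1) < (bS b q).val p := by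
    show (b.val * affS n q) (p+1) < (b.val * affS n q) p
    rw [vqp, vqp1]
    exact hd1
  have e1 := IH (bS b p) (by omega) a q hd12
  have e2 := IH (bS b q) (by omega) a p hd21
  have ebb : bS (bS b p) q = bS (bS b q) p := by
    apply Subtype.ext
    show b.val * affS n p * affS n q = b.val * affS n q * affS n p
    rw [mul_assoc, mul_assoc, affS_comm' hn hq1 hq2 hq3]
  rw [e1, e2, ebb]
  exact Rop_comm hn hq1 hq2 hq3 _

/-- key: adjacent (braid) case of descent-independence -/
theorem Dem_adj_case (hn : 2 ≤ n) (p : ℤ) (b : AffPerm n) (a : AffPerm n)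
    (hd1 : b.val (p+1) < b.val p) (hd2 : b.val (p+2) < b.val (p+1))
    (IH : ∀ b' : AffPerm n, invN n b'.val < invN n b.val → ∀ (a : AffPerm n) (i : ℤ),
      b'.val (i+1) < b'.val i → Dem n a b' = Rop n i (Dem n a (bS b' i))) :
    Rop n p (Dem n a (bS b p)) = Rop n (p+1) (Dem n a (bS b (p+1))) := by
  have h2 : ¬ (2:ℤ) % (n:ℤ) = 0 := two_mod_ne_of_chain hn b.2 hd1 hd2
  have hpp : p + 1 + 1 = p + 2 := by ring
  have hN1 := invN_bS_descent hn (b := b) hd1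
  have hd2' : b.val (p+1+1) < b.val (p+1) := by rw [hpp]; exact hd2
  have hN1' := invN_bS_descent hn (b := b) hd2'
  -- first chain : b1 = b s_p
  have hb1d : (bS b p).val (p+1+1) < (bS b p).val (p+1) := by
    show (b.val * affS n p) (p+1+1) < (b.val * affS n p) (p+1)
    rw [hpp, mulSp_p2 hn h2, mulSp_p1 hn]
    omega
  have hN2 := invN_bS_descent hn hb1d
  have hb2d : (bS (bS b p) (p+1)).val (p+1) < (bS (bS b p) (p+1)).val p := by
    show (b.val * affS n p * affS n (p+1)) (p+1) < (b.val * affS n p * affS n (p+1)) p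
    rw [mulSq_p hn h2, mulSq_p1 hn, mulSp_p hn, mulSp_p2 hn h2]
    exact hd2
  have e1 := IH (bS b p) (by omega) a (p+1) hb1d
  have e2 := IH (bS (bS b p) (p+1)) (by omega) a p hb2d
  -- second chain : b1' = b s_{p+1}
  have hb1d' : (bS b (p+1)).val (p+1) < (bS b (p+1)).val p := by
    show (b.val * affS n (p+1)) (p+1) < (b.val * affS n (p+1)) p
    rw [mulSq_p hn h2, mulSq_p1 hn]
    omega
  have hN2' := invN_bS_descent hn hb1d'
  have hb2d' : (bS (bS b (p+1)) p).val (p+1+1) < (bS (bS b (p+1)) p).val (p+1) := by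
    show (b.val * affS n (p+1) * affS n p) (p+1+1) < (b.val * affS n (p+1) * affS n p) (p+1)
    rw [hpp, mulSp_p2 hn h2, mulSp_p1 hn, mulSq_p2 hn, mulSq_p hn h2]
    exact hd1
  have e1' := IH (bS b (p+1)) (by omega) a p hb1d'
  have e2' := IH (bS (bS b (p+1)) p) (by omega) a (p+1) hb2d'
  -- the two bottom elements agree (group braid)
  have ebb : bS (bS (bS b p) (p+1)) p = bS (bS (bS b (p+1)) p) (p+1) := by
    apply Subtype.ext
    show b.val * affS n p * affS n (p+1) * affS n p
        = b.val * affS n (p+1) * affS n p * affS n (p+1)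
    have hb := affS_braid hn h2 p
    simp only [mul_assoc]
    simp only [mul_assoc] at hb
    rw [hb]
  rw [e1, e2, e1', e2', ebb]
  exact Rop_braid hn h2 p _

/-- THE MAIN LEMMA: the recursion may strip any descent -/
theorem Dem_main (hn : 2 ≤ n) : ∀ (N : ℕ) (b : AffPerm n), invN n b.val ≤ N →
    ∀ (a : AffPerm n) (i : ℤ), b.val (i+1) < b.val i →
    Dem n a b = Rop n i (Dem n a (bS b i)) := by
  intro N
  induction N with
  | zero =>
      intro b hN a i hdesc
      exfalso
      have := invN_bS_descent hn (b := b) hdesc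
      omega
  | succ N ihN =>
      intro b hN a i hdesc
      have IH : ∀ b' : AffPerm n, invN n b'.val < invN n b.val → ∀ (a : AffPerm n) (i : ℤ),
          b'.val (i+1) < b'.val i → Dem n a b' = Rop n i (Dem n a (bS b' i)) := by
        intro b' hlt a' i' hd'
        exact ihN b' (by omega) a' i' hd'
      -- reduce i to its window representative t
      obtain ⟨t, ht1, ht2, htc, hti⟩ := window_rep (n := n) (by omega) i
      obtain ⟨m, hv, hv'⟩ := apply_pair_rep (by omega) b.2.1 htc
      have hdt : b.val (t+1) < b.val t := by
        rw [hv, hv']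
        exact add_lt_add_left hdesc _
      have eRi : Rop n i (Dem n a (bS b i)) = Rop n t (Dem n a (bS b t)) := by
        rw [bS_congr hn b hti, Rop_congr hn hti]
      rw [eRi]
      -- the definition strips j₀
      have hne : ((Icc (1:ℤ) (n:ℤ)).filter (fun j => b.val (j+1) < b.val j)).Nonempty :=
        ⟨t, Finset.mem_filter.mpr ⟨Finset.mem_Icc.mpr ⟨ht1, ht2⟩, hdt⟩⟩
      set j₀ := ((Icc (1:ℤ) (n:ℤ)).filter (fun j => b.val (j+1) < b.val j)).min' hne with hj₀
      have hj₀mem := Finset.min'_mem _ hne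
      rw [Finset.mem_filter, Finset.mem_Icc] at hj₀mem
      obtain ⟨⟨hj₀1, hj₀2⟩, hdj₀⟩ := hj₀mem
      have hDstep : Dem n a b = Rop n j₀ (Dem n a (bS b j₀)) := Dem_step a b hne
      rw [hDstep]
      -- case analysis on the classes of t and j₀
      by_cases hA : (j₀ - t) % (n:ℤ) = 0
      · have : j₀ = t := by
          have := Meq0 (by omega) hA (by omega) (by omega)
          omega
        rw [this]
      · by_cases hB1 : (t - j₀ - 1) % (n:ℤ) = 0
        · -- t ≡ j₀ + 1 : adjacent with p := j₀
          have hdp1 : b.val (j₀+2) < b.val (j₀+1) := by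
            have hc : (t - (j₀+1)) % (n:ℤ) = 0 := by
              rwa [show t - (j₀+1) = t - j₀ - 1 by ring]
            obtain ⟨m', hw, hw'⟩ := apply_pair_rep (by omega) b.2.1 hc
            rw [show j₀ + 2 = j₀ + 1 + 1 by ring]
            linarith [hw, hw', hdt]
          have key := Dem_adj_case hn j₀ b a hdj₀ hdp1 IH
          rw [key]
          -- now Rop (j₀+1) ... = Rop t ...
          have hc : ((j₀+1) - t) % (n:ℤ) = 0 := by
            rw [show (j₀+1) - t = -(t - j₀ - 1) by ring]
            exact Mneg_iff.mpr hB1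
          rw [bS_congr hn b hc, Rop_congr hn hc]
        · by_cases hB2 : (j₀ - t - 1) % (n:ℤ) = 0
          · -- j₀ ≡ t + 1 : adjacent with p := t
            have hdp1 : b.val (t+2) < b.val (t+1) := by
              have hc : (t + 1 - j₀) % (n:ℤ) = 0 := by
                rw [show t + 1 - j₀ = -(j₀ - t - 1) by ring]
                exact Mneg_iff.mpr hB2
              obtain ⟨m', hw, hw'⟩ := apply_pair_rep (by omega) b.2.1 hc
              rw [show t + 2 = t + 1 + 1 by ring]
              linarith [hw, hw', hdj₀]
            have key := Dem_adj_case hn t b a hdt hdp1 IH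
            have hc : (j₀ - (t+1)) % (n:ℤ) = 0 := by
              rwa [show j₀ - (t+1) = j₀ - t - 1 by ring]
            rw [bS_congr hn b hc, Rop_congr hn hc]
            exact key.symm
          · -- commuting case, p := t, q := j₀
            exact (Dem_comm_case hn hA hB2 hB1 b a hdt hdj₀ IH).symm

end Dem

namespace Dem

open Finset Equiv

variable {n : ℕ}

theorem Dem_desc (hn : 2 ≤ n) {b : AffPerm n} (a : AffPerm n) {i : ℤ}
    (h : b.val (i+1) < b.val i) : Dem n a b = Rop n i (Dem n a (bS b i)) :=
  Dem_main hn (invN n b.val) b le_rfl a i h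

theorem bS_bS (b : AffPerm n) (i : ℤ) : bS (bS b i) i = b := by
  apply Subtype.ext
  show b.val * affS n i * affS n i = b.val
  rw [mul_assoc, affS_mul_self, mul_one]

theorem bS_descent (hn : 2 ≤ n) {x : AffPerm n} {i : ℤ} (h : x.val i < x.val (i+1)) :
    (bS x i).val (i+1) < (bS x i).val i := by
  show (x.val * affS n i) (i+1) < (x.val * affS n i) i
  rw [mulSp_p hn, mulSp_p1 hn]
  exact h

theorem Dem_ascent_push (hn : 2 ≤ n) {x : AffPerm n} (a : AffPerm n) {i : ℤ}
    (h : x.val i < x.val (i+1)) : Dem n a (bS x i) = Rop n i (Dem n a x) := by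
  have hd : (bS x i).val (i+1) < (bS x i).val i := bS_descent hn h
  rw [Dem_desc hn a hd, bS_bS]

theorem Dem_descent_of_descent (hn : 2 ≤ n) (a : AffPerm n) {b : AffPerm n} {i : ℤ}
    (h : b.val (i+1) < b.val i) : (Dem n a b).val (i+1) < (Dem n a b).val i := by
  rw [Dem_desc hn a h]
  exact Rop_descent_after hn i _

theorem Dem_Rop_right (hn : 2 ≤ n) (a b : AffPerm n) (i : ℤ) :
    Dem n a (Rop n i b) = Rop n i (Dem n a b) := by
  by_cases h : b.val i < b.val (i+1)
  · have e : Rop n i b = bS b i := by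
      apply Subtype.ext
      rw [Rop_of_ascent h]
      rfl
    rw [e]
    exact Dem_ascent_push hn a h
  · rw [Rop_of_descent h]
    have hd : b.val (i+1) < b.val i := by
      have := window_ne (π := b.val) i
      omega
    have := Dem_descent_of_descent hn a (b := b) hd
    rw [Rop_of_descent (by omega)]

theorem val_one_of_invN_zero (hn : 2 ≤ n) (c : AffPerm n) (h : invN n c.val = 0) :
    c.val = 1 := by
  apply eq_one_of_no_descent (by omega : 0 < n) c.2
  intro j _ _
  by_contra hc
  have hd : c.val (j+1) < c.val j := by
    have := window_ne (π := c.val) j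
    omega
  have := invN_descent hn c.2 j hd
  omega

/-- associativity -/
theorem Dem_assoc_aux (hn : 2 ≤ n) : ∀ (M : ℕ) (c : AffPerm n), invN n c.val ≤ M →
    ∀ a b : AffPerm n, Dem n (Dem n a b) c = Dem n a (Dem n b c) := by
  intro M
  induction M with
  | zero =>
      intro c hM a b
      have h1 : c.val = 1 := val_one_of_invN_zero hn c (by omega)
      rw [Dem_of_val_one _ _ h1, Dem_of_val_one _ _ h1]
  | succ M ih =>
      intro c hM a b
      by_cases h1 : c.val = 1
      · rw [Dem_of_val_one _ _ h1, Dem_of_val_one _ _ h1]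
      · obtain ⟨j, _, _, hdesc⟩ := exists_descent (by omega : 0 < n) c.2 h1
        set c' := bS c j with hc'
        have hasc : c'.val j < c'.val (j+1) := by
          show (c.val * affS n j) j < (c.val * affS n j) (j+1)
          rw [mulSp_p hn, mulSp_p1 hn]
          exact hdesc
        have hcc : bS c' j = c := bS_bS c j
        have hN : invN n c'.val ≤ M := by
          have h2 := invN_bS_descent hn (b := c) hdesc
          rw [← hc'] at h2
          omega
        calc Dem n (Dem n a b) c = Dem n (Dem n a b) (bS c' j) := by rw [hcc]
        _ = Rop n j (Dem n (Dem n a b) c') := Dem_ascent_push hn _ hasc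
        _ = Rop n j (Dem n a (Dem n b c')) := by rw [ih c' hN a b]
        _ = Dem n a (Rop n j (Dem n b c')) := (Dem_Rop_right hn a _ j).symm
        _ = Dem n a (Dem n b (bS c' j)) := by rw [Dem_ascent_push hn b hasc]
        _ = Dem n a (Dem n b c) := by rw [hcc]

theorem Dem_assoc (hn : 2 ≤ n) (a b c : AffPerm n) :
    Dem n (Dem n a b) c = Dem n a (Dem n b c) :=
  Dem_assoc_aux hn (invN n c.val) c le_rfl a b

/-- idempotence on simple reflections -/
theorem Dem_idem (hn : 2 ≤ n) (i : ℤ) (a : AffPerm n) (ha : a.val = affS n i) :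
    Dem n a a = a := by
  have hd : a.val (i+1) < a.val i := by
    have h1 : affS n i (i+1) = i + 1 - 1 := affS_val1 hn (by simp)
    rw [ha, h1, affS_val0 hn (by simp)]
    omega
  rw [Dem_desc hn a hd]
  have h1 : (bS a i).val = 1 := by
    show a.val * affS n i = 1
    rw [ha, affS_mul_self]
  rw [Dem_of_val_one _ _ h1]
  exact Rop_of_descent (by omega)

/-- agreement with group product in the length-additive case -/
theorem Dem_additive_aux (hn : 2 ≤ n) : ∀ (M : ℕ) (b : AffPerm n), invN n b.val ≤ M →
    ∀ a : AffPerm n, wordLength n (a.val * b.val) = wordLength n a.val + wordLength n b.val →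
    (Dem n a b).val = a.val * b.val := by
  intro M
  induction M with
  | zero =>
      intro b hM a _
      have h1 : b.val = 1 := val_one_of_invN_zero hn b (by omega)
      rw [Dem_of_val_one _ _ h1, h1, mul_one]
  | succ M ih =>
      intro b hM a hadd
      by_cases h1 : b.val = 1
      · rw [Dem_of_val_one _ _ h1, h1, mul_one]
      · obtain ⟨j, _, _, hdesc⟩ := exists_descent (by omega : 0 < n) b.2 h1
        set b' := bS b j with hb'
        have hab : IsAffine n (a.val * b.val) := isAffine_mul a.2 b.2
        have hab' : IsAffine n (a.val * b'.val) := isAffine_mul a.2 b'.2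
        have hNb : invN n b'.val + 1 = invN n b.val := invN_bS_descent hn hdesc
        have hlb' : wordLength n b'.val + 1 = wordLength n b.val := by
          rw [wordLength_eq hn b'.2, wordLength_eq hn b.2]
          exact hNb
        have heq : a.val * b'.val = (a.val * b.val) * affS n j := by
          show a.val * (b.val * affS n j) = _
          rw [mul_assoc]
        -- the length of ab s_j is ℓ(ab) ± 1, and subadditivity forces -1
        have hsub : wordLength n (a.val * b'.val)
            ≤ wordLength n a.val + wordLength n b'.val :=
          wordLength_mul_le hn a.2 b'.2
        have hstep : wordLength n (a.val * b.val) ≤ wordLength n (a.val * b'.val) + 1 := by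
          rw [wordLength_eq hn hab, wordLength_eq hn hab']
          by_cases hasc : (a.val * b.val) j < (a.val * b.val) (j+1)
          · have h3 := invN_ascent hn hab j hasc
            rw [heq, h3]
            omega
          · have hd : (a.val * b.val) (j+1) < (a.val * b.val) j := by
              have := window_ne (π := a.val * b.val) j
              omega
            have := invN_descent hn hab j hd
            rw [heq]
            omega
        have hadd' : wordLength n (a.val * b'.val)
            = wordLength n a.val + wordLength n b'.val := by omega
        have hIH := ih b' (by omega) a hadd'
        -- rewrite using the main lemma
        rw [Dem_desc hn a hdesc]
        -- Rop j applied to Dem a b' : show ascent at j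
        have hval : (Dem n a b').val = a.val * b'.val := hIH
        have hasc2 : (Dem n a b').val j < (Dem n a b').val (j+1) := by
          rw [hval]
          by_contra hc
          have hd : (a.val * b'.val) (j+1) < (a.val * b'.val) j := by
            have := window_ne (π := a.val * b'.val) j
            omega
          have hstep2 := invN_descent hn hab' j hd
          have he2 : a.val * b'.val * affS n j = a.val * b.val := by
            rw [heq, mul_assoc, affS_mul_self, mul_one]
          rw [he2] at hstep2
          have e1 : wordLength n (a.val * b.val) + 1 = wordLength n (a.val * b'.val) := by
            rw [wordLength_eq hn hab, wordLength_eq hn hab']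
            omega
          omega
        rw [Rop_of_ascent hasc2, hval, heq, mul_assoc, affS_mul_self, mul_one]

theorem Dem_additive (hn : 2 ≤ n) (a b : AffPerm n)
    (h : wordLength n (a.val * b.val) = wordLength n a.val + wordLength n b.val) :
    (Dem n a b).val = a.val * b.val :=
  Dem_additive_aux hn (invN n b.val) b le_rfl a h

/-- uniqueness -/
theorem Dem_unique (hn : 2 ≤ n) (D : AffPerm n → AffPerm n → AffPerm n)
    (hassoc : ∀ a b c, D (D a b) c = D a (D b c))
    (hidem : ∀ (i : ℤ) (a : AffPerm n), a.val = affS n i → D a a = a)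
    (hadd : ∀ a b : AffPerm n,
      wordLength n (a.val * b.val) = wordLength n a.val + wordLength n b.val →
      (D a b).val = a.val * b.val) :
    ∀ a b : AffPerm n, D a b = Dem n a b := by
  have main : ∀ (M : ℕ) (b : AffPerm n), invN n b.val ≤ M → ∀ a : AffPerm n,
      D a b = Dem n a b := by
    intro M
    induction M with
    | zero =>
        intro b hM a
        have h1 : b.val = 1 := val_one_of_invN_zero hn b (by omega)
        have h2 : (D a b).val = a.val := by
          have h3 := hadd a b (by
            rw [h1, mul_one, wordLength_one hn]
            omega)
          rw [h1, mul_one] at h3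
          exact h3
        rw [Dem_of_val_one _ _ h1]
        exact Subtype.ext h2
    | succ M ih =>
        intro b hM a
        by_cases h1 : b.val = 1
        · have h2 : (D a b).val = a.val := by
            have h3 := hadd a b (by
              rw [h1, mul_one, wordLength_one hn]
              omega)
            rw [h1, mul_one] at h3
            exact h3
          rw [Dem_of_val_one _ _ h1]
          exact Subtype.ext h2
        · obtain ⟨j, _, _, hdesc⟩ := exists_descent (by omega : 0 < n) b.2 h1
          set b' := bS b j with hb'
          set s : AffPerm n := ⟨affS n j, isAffine_affS j⟩ with hs
          have hNb : invN n b'.val + 1 = invN n b.val := invN_bS_descent hn hdesc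
          have hlb' : wordLength n b'.val + 1 = wordLength n b.val := by
            rw [wordLength_eq hn b'.2, wordLength_eq hn b.2]
            exact hNb
          have hbb : b'.val * s.val = b.val := by
            show b.val * affS n j * affS n j = b.val
            rw [mul_assoc, affS_mul_self, mul_one]
          have hDbs : D b' s = b := by
            apply Subtype.ext
            rw [hadd b' s (by
              rw [hbb, wordLength_affS hn]
              omega)]
            exact hbb
          have step1 : D a b = D (D a b') s := by
            rw [← hDbs, ← hassoc]
          have hIH : D a b' = Dem n a b' := ih b' (by omega) a
          set c : AffPerm n := Dem n a b' with hc
          -- compute D c s = Rop j c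
          have hDcs : D c s = Rop n j c := by
            by_cases hasc : c.val j < c.val (j+1)
            · apply Subtype.ext
              rw [Rop_of_ascent hasc]
              apply hadd c s
              show wordLength n (c.val * affS n j) = _
              rw [wordLength_eq hn (isAffine_mul c.2 (isAffine_affS j)),
                wordLength_eq hn c.2, invN_ascent hn c.2 j hasc, wordLength_affS hn]
            · have hdc : c.val (j+1) < c.val j := by
                have := window_ne (π := c.val) j
                omega
              set c' : AffPerm n := bS c j with hc'
              have hcc : c'.val * s.val = c.val := by
                show c.val * affS n j * affS n j = c.val
                rw [mul_assoc, affS_mul_self, mul_one]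
              have hNc : invN n c'.val + 1 = invN n c.val := invN_bS_descent hn hdc
              have hDc's : D c' s = c := by
                apply Subtype.ext
                rw [hadd c' s (by
                  rw [hcc, wordLength_eq hn c.2, wordLength_eq hn c'.2,
                    wordLength_affS hn]
                  omega)]
                exact hcc
              have hss : D s s = s := hidem j s rfl
              calc D c s = D (D c' s) s := by rw [hDc's]
              _ = D c' (D s s) := hassoc c' s s
              _ = D c' s := by rw [hss]
              _ = c := hDc's
              _ = Rop n j c := (Rop_of_descent (by omega)).symm
          rw [step1, hIH, hDcs, hc, Dem_desc hn a hdesc, hb']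
  intro a b
  exact main (invN n b.val) b le_rfl a

/-- computation of `Dem a s` -/
theorem Dem_a_s (hn : 2 ≤ n) (a : AffPerm n) (i : ℤ) (s : AffPerm n)
    (hs : s.val = affS n i) : Dem n a s = Rop n i a := by
  have hd : s.val (i+1) < s.val i := by
    have h1 : affS n i (i+1) = i + 1 - 1 := affS_val1 hn (by simp)
    rw [hs, h1, affS_val0 hn (by simp)]
    omega
  rw [Dem_desc hn a hd]
  have h1 : (bS s i).val = 1 := by
    show s.val * affS n i = 1
    rw [hs, affS_mul_self]
  rw [Dem_of_val_one _ _ h1]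

/-- the inverse anti-automorphism trick : computation of `Dem s x` -/
noncomputable def Ainv (x : AffPerm n) : AffPerm n := ⟨x.val⁻¹, isAffine_inv x.2⟩

theorem Ainv_Ainv (x : AffPerm n) : Ainv (Ainv x) = x := by
  apply Subtype.ext
  show x.val⁻¹⁻¹ = x.val
  rw [inv_inv]

theorem Dem_s_x (hn : 2 ≤ n) (s : AffPerm n) (i : ℤ) (hs : s.val = affS n i)
    (x : AffPerm n) : Dem n s x = Ainv (Rop n i (Ainv x)) := by
  set D2 : AffPerm n → AffPerm n → AffPerm n :=
    fun a b => Ainv (Dem n (Ainv b) (Ainv a)) with hD2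
  have hES : ∀ a b, D2 a b = Ainv (Dem n (Ainv b) (Ainv a)) := fun a b => rfl
  have hu := Dem_unique hn D2
    (by
      intro a b c
      rw [hES, hES, hES, hES, Ainv_Ainv, Ainv_Ainv, Dem_assoc hn])
    (by
      intro i' a ha
      have hAa : Ainv a = a := by
        apply Subtype.ext
        show a.val⁻¹ = a.val
        rw [ha, affS_inv]
      rw [hES, hAa, Dem_idem hn i' a ha, hAa])
    (by
      intro a b hadd
      have h1 : (Ainv b).val * (Ainv a).val = (a.val * b.val)⁻¹ := by
        show b.val⁻¹ * a.val⁻¹ = _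
        rw [mul_inv_rev]
      have h2 : wordLength n ((Ainv b).val * (Ainv a).val)
          = wordLength n (Ainv b).val + wordLength n (Ainv a).val := by
        rw [h1, wordLength_inv hn (isAffine_mul a.2 b.2)]
        show _ = wordLength n b.val⁻¹ + wordLength n a.val⁻¹
        rw [wordLength_inv hn b.2, wordLength_inv hn a.2]
        omega
      have h3 := Dem_additive hn (Ainv b) (Ainv a) h2
      rw [hES]
      show (Dem n (Ainv b) (Ainv a)).val⁻¹ = _
      rw [h3, h1, inv_inv])
  have := (hu s x).symm
  rw [this, hES]
  have hAs : (Ainv x) |> fun y => True := trivial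
  have : Dem n (Ainv x) (Ainv s) = Rop n i (Ainv x) := by
    apply Dem_a_s hn (Ainv x) i (Ainv s)
    show s.val⁻¹ = affS n i
    rw [hs, affS_inv]
  rw [this]

end Dem

namespace Dem

open Finset Equiv

variable {n : ℕ}

theorem inv_fixed (hn : 2 ≤ n) {z : AffPerm n} (hz : z.val⁻¹ = z.val) {x : ℤ}
    (h : (z.val x - x) % (n:ℤ) = 0) : z.val x = x := by
  have hsq : z.val * z.val = 1 := mul_eq_one_iff_inv_eq.mpr hz
  have hinv : z.val (z.val x) = x := by
    have h2 : (z.val * z.val) x = (1 : Equiv.Perm ℤ) x := by rw [hsq]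
    simpa using h2
  obtain ⟨k, hk⟩ := md.mp h
  have e : z.val x = x + k * (n:ℤ) := by linear_combination hk
  have e3 : z.val (z.val x) = z.val x + k * n := by
    conv_lhs => rw [e]
    rw [aff_apply_add_mul z.2.1]
  rw [hinv] at e3
  have e4 : k * (n:ℤ) = 0 := by linarith [e, e3]
  rcases mul_eq_zero.mp e4 with h5 | h5
  · rw [h5] at e
    simpa using e
  · exact absurd h5 (by omega)

theorem mono_case (hn : 2 ≤ n) {z : AffPerm n} (hz : z.val⁻¹ = z.val) (i : ℤ)
    (hasc : z.val i < z.val (i+1)) (hnf : ¬ (z.val i = i ∧ z.val (i+1) = i+1)) :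
    affS n i (z.val i) < affS n i (z.val (i+1)) := by
  set a := z.val i with ha'
  set b := z.val (i+1) with hb'
  have hdist : ¬ (b - a) % (n:ℤ) = 0 := by
    apply class_ne z.2
    intro hc
    exact one_mod_ne hn (by rwa [show i + 1 - i = 1 by ring] at hc)
  have hfa : (a - i) % (n:ℤ) = 0 → a = i := fun h => inv_fixed hn hz h
  have hfb : (b - (i+1)) % (n:ℤ) = 0 → b = i+1 := fun h => inv_fixed hn hz h
  by_cases ca0 : (a - i) % (n:ℤ) = 0
  · have haa : a = i := hfa ca0
    have cb0 : ¬ (b - i) % (n:ℤ) = 0 := fun hc => hdist (by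
      have := Msub hc ca0
      rwa [show b - i - (a - i) = b - a by ring] at this)
    by_cases cb1 : (b - i - 1) % (n:ℤ) = 0
    · exact absurd ⟨haa, hfb (by rwa [show b - (i+1) = b - i - 1 by ring])⟩ hnf
    · rw [affS_val0 hn ca0, affS_val2 hn cb0 cb1]
      have hbne : b ≠ i + 1 := fun hc => cb1 (by rw [hc]; simp)
      omega
  · by_cases ca1 : (a - i - 1) % (n:ℤ) = 0
    · rw [affS_val1 hn ca1]
      by_cases cb0 : (b - i) % (n:ℤ) = 0
      · rw [affS_val0 hn cb0]
        omega
      · have cb1 : ¬ (b - i - 1) % (n:ℤ) = 0 := fun hc => hdist (by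
          have := Msub hc ca1
          rwa [show b - i - 1 - (a - i - 1) = b - a by ring] at this)
        rw [affS_val2 hn cb0 cb1]
        omega
    · rw [affS_val2 hn ca0 ca1]
      by_cases cb0 : (b - i) % (n:ℤ) = 0
      · rw [affS_val0 hn cb0]
        omega
      · by_cases cb1 : (b - i - 1) % (n:ℤ) = 0
        · have hb : b = i+1 := hfb (by rwa [show b - (i+1) = b - i - 1 by ring])
          rw [affS_val1 hn cb1]
          have hane : a ≠ i := fun hc => ca0 (by rw [hc]; simp)
          omega
        · rw [affS_val2 hn cb0 cb1]
          omega

end Dem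

/-- there is a unique associative Demazure product on `S̃_n` with
`s_i ∘ s_i = s_i` which agrees with the group product on length-additive pairs;
moreover `s_i ∘ z ∘ s_i` is given by the stated case formula for involutions `z`. -/
theorem demazure_product_exists_unique (n : ℕ) (hn : 0 < n) :
    (∃! D : AffPerm n → AffPerm n → AffPerm n,
      (∀ a b c, D (D a b) c = D a (D b c)) ∧
      (∀ (i : ℤ) (a : AffPerm n), a.val = affS n i → D a a = a) ∧
      (∀ a b : AffPerm n,
        wordLength n (a.val * b.val) = wordLength n a.val + wordLength n b.val →
        (D a b).val = a.val * b.val)) ∧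
    (∀ D : AffPerm n → AffPerm n → AffPerm n,
      ((∀ a b c, D (D a b) c = D a (D b c)) ∧
       (∀ (i : ℤ) (a : AffPerm n), a.val = affS n i → D a a = a) ∧
       (∀ a b : AffPerm n,
         wordLength n (a.val * b.val) = wordLength n a.val + wordLength n b.val →
         (D a b).val = a.val * b.val)) →
      ∀ (z s : AffPerm n) (i : ℤ), z.val⁻¹ = z.val → s.val = affS n i →
        ((z.val (i + 1) < z.val i → D s (D z s) = z) ∧
         (z.val i = i ∧ z.val (i + 1) = i + 1 →
           (D s (D z s)).val = z.val * affS n i) ∧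
         (¬ z.val (i + 1) < z.val i → ¬ (z.val i = i ∧ z.val (i + 1) = i + 1) →
           (D s (D z s)).val = affS n i * z.val * affS n i))) := by
  rcases Nat.lt_or_ge n 2 with hsmall | hn2
  · -- ===== degenerate case n = 1 =====
    have hn1 : n = 1 := by omega
    subst hn1
    have htriv : ∀ x : AffPerm 1, x.val = 1 := fun x => Dem.affine_n1 x.2
    constructor
    · refine ⟨fun a _ => a, ⟨?_, ?_, ?_⟩, ?_⟩
      · intro a b c; rfl
      · intro i a _; rfl
      · intro a b _
        rw [htriv b, mul_one]
      · intro D _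
        funext a b
        apply Subtype.ext
        rw [htriv (D a b), htriv a]
    · intro D _ z s i hz hs
      refine ⟨?_, ?_, ?_⟩
      · intro h
        exfalso
        rw [htriv z] at h
        simp only [Equiv.Perm.one_apply] at h
        omega
      · intro _
        rw [htriv (D s (D z s)), htriv z, Dem.affS_one_of rfl, one_mul]
      · intro h1 h2
        exfalso
        apply h2
        rw [htriv z]
        exact ⟨rfl, rfl⟩
  · -- ===== main case n ≥ 2 =====
    constructor
    · refine ⟨Dem.Dem n, ⟨Dem.Dem_assoc hn2, fun i a ha => Dem.Dem_idem hn2 i a ha,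
        fun a b h => Dem.Dem_additive hn2 a b h⟩, ?_⟩
      intro D hD
      funext a b
      exact Dem.Dem_unique hn2 D hD.1 hD.2.1 hD.2.2 a b
    · intro D hD z s i hz hs
      have hDeq : ∀ a b, D a b = Dem.Dem n a b :=
        Dem.Dem_unique hn2 D hD.1 hD.2.1 hD.2.2
      have hzs : Dem.Dem n z s = Dem.Rop n i z := Dem.Dem_a_s hn2 z i s hs
      have hAz : Dem.Ainv z = z := Subtype.ext hz
      refine ⟨?_, ?_, ?_⟩
      · -- case 1 : descent
        intro h
        have h1 : Dem.Rop n i z = z := Dem.Rop_of_descent (by omega)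
        rw [hDeq, hDeq, hzs, h1, Dem.Dem_s_x hn2 s i hs z, hAz, h1, hAz]
      · -- case 2 : double fixed point
        rintro ⟨hf1, hf2⟩
        have hasc : z.val i < z.val (i+1) := by rw [hf1, hf2]; omega
        have hX : Dem.Rop n i z = Dem.bS z i := by
          apply Subtype.ext
          rw [Dem.Rop_of_ascent hasc]
          rfl
        have hAX : (Dem.Ainv (Dem.bS z i)).val = affS n i * z.val := by
          show (z.val * affS n i)⁻¹ = _
          rw [mul_inv_rev, Dem.affS_inv, hz]
        have e1 : (affS n i * z.val) i = i + 1 := by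
          show affS n i (z.val i) = _
          rw [hf1, Dem.affS_val0 hn2 (by simp)]
        have e2 : (affS n i * z.val) (i+1) = i := by
          show affS n i (z.val (i+1)) = _
          rw [hf2]
          have h3 : affS n i (i+1) = i + 1 - 1 := Dem.affS_val1 hn2 (by simp)
          omega
        have hdesc2 : ¬ (Dem.Ainv (Dem.bS z i)).val i
            < (Dem.Ainv (Dem.bS z i)).val (i+1) := by
          rw [hAX, e1, e2]
          omega
        rw [hDeq, hDeq, hzs, hX, Dem.Dem_s_x hn2 s i hs (Dem.bS z i),
          Dem.Rop_of_descent hdesc2, Dem.Ainv_Ainv]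
        rfl
      · -- case 3 : generic ascent
        intro h1 h2
        have hzne := Dem.window_ne (π := z.val) i
        have hasc : z.val i < z.val (i+1) := by omega
        have hX : Dem.Rop n i z = Dem.bS z i := by
          apply Subtype.ext
          rw [Dem.Rop_of_ascent hasc]
          rfl
        have hAX : (Dem.Ainv (Dem.bS z i)).val = affS n i * z.val := by
          show (z.val * affS n i)⁻¹ = _
          rw [mul_inv_rev, Dem.affS_inv, hz]
        have hmono := Dem.mono_case hn2 hz i hasc h2
        have hasc2 : (Dem.Ainv (Dem.bS z i)).val i
            < (Dem.Ainv (Dem.bS z i)).val (i+1) := by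
          rw [hAX]
          exact hmono
        rw [hDeq, hDeq, hzs, hX, Dem.Dem_s_x hn2 s i hs (Dem.bS z i)]
        show (Dem.Rop n i (Dem.Ainv (Dem.bS z i))).val⁻¹ = _
        rw [Dem.Rop_of_ascent hasc2, mul_inv_rev, Dem.affS_inv, hAX,
          mul_inv_rev, Dem.affS_inv, hz]
        rw [← mul_assoc]
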